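/- arXiv:2512.12864 — 5 statements merged into one kernel-verified Lean document; each statement's English description precedes it below -/
import Mathlib

section
/- For the Riemann–Liouville kernel K(t,s) = √(2H)·(t−s)^{H−1/2} (for 0 < s < t, and 0 otherwise), with 1/2 < H < 1, the covariance R(s,t) = ∫₀^{s∧t} K(t,u)K(s,u) du of the Riemann–Liouville fractional Brownian motion satisfies, for 0 < s < t: ∂²R/∂t∂s (s,t) = 2H(H−1/2)² (t−s)^{2H−2} · B_{s/t}(H−1/2, 2−2H), where B_x(a,b) = ∫₀ˣ u^{a−1}(1−u)^{b−1} du is the incomplete beta function. -/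
open MeasureTheory Real

/-- Riemann–Liouville kernel `K(t,s) = √(2H)(t-s)^{H-1/2}` for `0 < s < t`, `0` otherwise. -/
noncomputable def K (H t s : ℝ) : ℝ :=
  if 0 < s ∧ s < t then Real.sqrt (2*H) * (t - s) ^ (H - 1/2) else 0

/-- Covariance of the Riemann–Liouville fractional Brownian motion. -/
noncomputable def R (H s t : ℝ) : ℝ := ∫ u in (0:ℝ)..(min s t), K H t u * K H s u

/-- Incomplete beta function `B_x(a,b) = ∫₀ˣ u^{a-1}(1-u)^{b-1} du`. -/
noncomputable def incBeta (x a b : ℝ) : ℝ := ∫ u in (0:ℝ)..x, u ^ (a-1) * (1-u) ^ (b-1)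

noncomputable def Ifun (H x : ℝ) : ℝ := ∫ v in (0:ℝ)..x, v ^ (H - 1/2) * (1 - v) ^ (-2*H - 1)

lemma cont_rpow {a : ℝ} (ha : 0 < a) : Continuous (fun x : ℝ => x ^ a) := by
  rw [continuous_iff_continuousAt]
  exact fun x => Real.continuousAt_rpow_const x a (Or.inr ha.le)

lemma Ifun_contAt {H v : ℝ} (hH : 1/2 < H) (hv : v < 1) :
    ContinuousAt (fun v : ℝ => v ^ (H - 1/2) * (1 - v) ^ (-2*H - 1)) v := by
  have h1 : ContinuousAt (fun v : ℝ => v ^ (H - 1/2)) v :=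
    Real.continuousAt_rpow_const v _ (Or.inr (by linarith))
  have h2 : ContinuousAt (fun v : ℝ => (1 - v) ^ (-2*H - 1)) v := by
    have hb : (1 : ℝ) - v ≠ 0 := by linarith
    exact (Real.continuousAt_rpow_const (1 - v) _ (Or.inl hb)).comp
      ((continuous_const.sub continuous_id).continuousAt)
  exact h1.mul h2

lemma Ifun_meas (H : ℝ) : Measurable (fun v : ℝ => v ^ (H - 1/2) * (1 - v) ^ (-2*H - 1)) :=
  (measurable_id.pow_const _).mul ((measurable_const.sub measurable_id).pow_const _)

lemma Ifun_hasDerivAt {H x : ℝ} (hH : 1/2 < H) (hx0 : 0 < x) (hx1 : x < 1) :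
    HasDerivAt (Ifun H) (x ^ (H - 1/2) * (1 - x) ^ (-2*H - 1)) x := by
  apply intervalIntegral.integral_hasDerivAt_right
  · apply ContinuousOn.intervalIntegrable
    rw [Set.uIcc_of_le hx0.le]
    exact fun v hv => (Ifun_contAt hH (lt_of_le_of_lt hv.2 hx1)).continuousWithinAt
  · exact ⟨Set.univ, Filter.univ_mem, (Ifun_meas H).aestronglyMeasurable⟩
  · exact Ifun_contAt hH hx1

-- substitution lemma
lemma subst_lemma {H s' t : ℝ} (hH : 1/2 < H) (hs : 0 < s') (hst : s' < t) :
    ∫ u in (0:ℝ)..s', (t-u) ^ (H-1/2) * (s'-u) ^ (H-1/2)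
      = (t-s') ^ (2*H) * Ifun H (s'/t) := by
  have ht0 : (0:ℝ) < t := hs.trans hst
  have hc : (0:ℝ) < t - s' := by linarith
  have ha : (0:ℝ) < H - 1/2 := by linarith
  have hxt : s'/t < 1 := (div_lt_one ht0).mpr hst
  have hxt0 : 0 ≤ s'/t := by positivity
  set g : ℝ → ℝ := fun u => (t-u) ^ (H-1/2) * (s'-u) ^ (H-1/2) with hg
  have hgc : Continuous g := by
    exact ((cont_rpow ha).comp (continuous_const.sub continuous_id)).mul
      ((cont_rpow ha).comp (continuous_const.sub continuous_id))
  set φ : ℝ → ℝ := fun v => (s' - t*v)/(1 - v) with hφ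
  set φ' : ℝ → ℝ := fun v => (s'-t)/(1-v)^2 with hφ'
  have hden : ∀ v ∈ Set.uIcc (0:ℝ) (s'/t), (1:ℝ) - v ≠ 0 := by
    intro v hv
    rw [Set.uIcc_of_le hxt0] at hv
    have := hv.2
    have : v < 1 := lt_of_le_of_lt this hxt
    linarith
  have h1 : ∀ v ∈ Set.uIcc (0:ℝ) (s'/t), HasDerivAt φ (φ' v) v := by
    intro v hv
    have hd := hden v hv
    have h := ((hasDerivAt_const v s').sub ((hasDerivAt_id v).const_mul t)).div
      ((hasDerivAt_const v (1:ℝ)).sub (hasDerivAt_id v)) hd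
    simp only [id_eq] at h
    have heq : φ' v = ((0 - t*1)*(1-v) - (s'-t*v)*(0-1))/(1-v)^2 := by
      simp only [hφ']; ring
    rw [heq]; exact h
  have h2 : ContinuousOn φ' (Set.uIcc (0:ℝ) (s'/t)) := by
    apply ContinuousOn.div continuousOn_const
    · exact ((continuous_const.sub continuous_id).pow 2).continuousOn
    · intro v hv
      exact pow_ne_zero 2 (hden v hv)
  have key := intervalIntegral.integral_comp_smul_deriv h1 h2 hgc
  have hφ0 : φ 0 = s' := by simp [hφ]
  have hφx : φ (s'/t) = 0 := by
    simp only [hφ]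
    rw [div_eq_zero_iff]
    left
    field_simp
    ring
  rw [hφ0, hφx] at key
  -- LHS of key equals pointwise nice form
  have hpt : ∀ v ∈ Set.uIcc (0:ℝ) (s'/t),
      φ' v • g (φ v) = -((t-s') ^ (2*H) * (v ^ (H-1/2) * (1-v) ^ (-2*H-1))) := by
    intro v hv
    rw [Set.uIcc_of_le hxt0] at hv
    have hv0 : 0 ≤ v := hv.1
    have h1v : 0 < 1 - v := by
      have : v < 1 := lt_of_le_of_lt hv.2 hxt
      linarith
    have htφ : t - φ v = (t-s')/(1-v) := by
      simp only [hφ]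
      field_simp
      ring
    have hsφ : s' - φ v = (v*(t-s'))/(1-v) := by
      simp only [hφ]
      field_simp
      ring
    simp only [smul_eq_mul, hg, htφ, hsφ, hφ']
    rw [Real.div_rpow hc.le h1v.le, Real.div_rpow (by positivity) h1v.le,
      Real.mul_rpow hv0 hc.le]
    rw [show (2*H : ℝ) = (H-1/2) + (H-1/2) + 1 by ring,
      Real.rpow_add hc, Real.rpow_add hc, Real.rpow_one,
      show (-2*H-1 : ℝ) = (-(H-1/2)) + (-(H-1/2)) + (-2) by ring,
      Real.rpow_add h1v, Real.rpow_add h1v,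
      Real.rpow_neg h1v.le, Real.rpow_neg h1v.le,
      show ((2:ℝ) : ℝ) = ((2:ℕ):ℝ) by norm_num, Real.rpow_natCast]
    have hne : (1-v) ^ (H-1/2) ≠ 0 := by positivity
    field_simp
    ring
  simp only [Function.comp_def] at key
  rw [intervalIntegral.integral_congr hpt] at key
  rw [intervalIntegral.integral_symm 0 s'] at key
  simp only [intervalIntegral.integral_neg] at key
  rw [intervalIntegral.integral_const_mul] at key
  rw [Ifun]
  linarith [key]

lemma closed_form {H s' t : ℝ} (hH : 1/2 < H) (hs : 0 < s') (hst : s' < t) :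
    R H s' t = 2*H * ((t-s') ^ (2*H) * Ifun H (s'/t)) := by
  have ha : (0:ℝ) < H - 1/2 := by linarith
  have h2H : (0:ℝ) ≤ 2*H := by linarith
  have step1 : R H s' t
      = ∫ u in (0:ℝ)..s', 2*H * ((t-u) ^ (H-1/2) * (s'-u) ^ (H-1/2)) := by
    rw [R, min_eq_left hst.le]
    apply intervalIntegral.integral_congr_ae
    apply Filter.Eventually.of_forall
    intro u hu
    rw [Set.uIoc_of_le hs.le] at hu
    rcases eq_or_lt_of_le hu.2 with heq | hlt
    · subst heq
      rw [K, K, if_pos ⟨hu.1, hst⟩, if_neg (by simp)]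
      rw [sub_self, Real.zero_rpow (by linarith : H - 1/2 ≠ 0)]
      ring
    · rw [K, K, if_pos ⟨hu.1, lt_trans hlt hst⟩, if_pos ⟨hu.1, hlt⟩]
      rw [show Real.sqrt (2*H) * (t-u) ^ (H-1/2) * (Real.sqrt (2*H) * (s'-u) ^ (H-1/2))
          = (Real.sqrt (2*H) * Real.sqrt (2*H)) * ((t-u) ^ (H-1/2) * (s'-u) ^ (H-1/2)) by ring,
        Real.mul_self_sqrt h2H]
  rw [step1, intervalIntegral.integral_const_mul, subst_lemma hH hs hst]


lemma beta_id {H x : ℝ} (hH : 1/2 < H) (hx0 : 0 < x) (hx1 : x < 1) :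
    (H-1/2) * incBeta x (H-1/2) (2-2*H) + 4*H * Ifun H x
      = x ^ (H-1/2) * (1+x) * (1-x) ^ (-2*H) := by
  have ha : (0:ℝ) < H - 1/2 := by linarith
  have h1x : (0:ℝ) < 1 - x := by linarith
  set f1 : ℝ → ℝ := fun v => v ^ (H-1/2-1) * (1-v) ^ (2-2*H-1) with hf1
  set f2 : ℝ → ℝ := fun v => v ^ (H-1/2) * (1-v) ^ (-2*H-1) with hf2
  set g : ℝ → ℝ := fun v => v ^ (H-1/2) * (1+v) * (1-v) ^ (-2*H) with hg
  -- integrability of f1 term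
  have i1 : IntervalIntegrable (fun v => (H-1/2) * f1 v) volume 0 x := by
    have hbase : IntervalIntegrable
        (fun v : ℝ => ((H-1/2) * (1-x) ^ (2-2*H-1)) * v ^ (H-1/2-1)) volume 0 x :=
      (intervalIntegral.intervalIntegrable_rpow' (by linarith)).const_mul _
    apply hbase.mono_fun
    · exact ((measurable_const.mul ((measurable_id.pow_const _).mul
        ((measurable_const.sub measurable_id).pow_const _)))).aestronglyMeasurable
    · rw [Filter.EventuallyLE, ae_restrict_iff' measurableSet_uIoc]
      apply Filter.Eventually.of_forall
      intro v hv
      rw [Set.uIoc_of_le hx0.le] at hv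
      have hv0 : 0 < v := hv.1
      have h1v : 0 < 1 - v := by have := hv.2; linarith
      simp only [hf1, Real.norm_eq_abs]
      rw [abs_of_nonneg (by positivity), abs_of_nonneg]
      · rw [show (H-1/2) * (v ^ (H-1/2-1) * (1-v) ^ (2-2*H-1))
            = ((H-1/2) * (1-v) ^ (2-2*H-1)) * v ^ (H-1/2-1) by ring]
        apply mul_le_mul_of_nonneg_right _ (by positivity)
        apply mul_le_mul_of_nonneg_left _ ha.le
        exact Real.rpow_le_rpow_of_nonpos h1x (by linarith [hv.2] : 1-x ≤ 1-v) (by linarith)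
      · apply mul_nonneg (mul_nonneg ha.le (by positivity)) (by positivity)
  have i2 : IntervalIntegrable (fun v => 4*H * f2 v) volume 0 x := by
    apply IntervalIntegrable.const_mul
    apply ContinuousOn.intervalIntegrable
    rw [Set.uIcc_of_le hx0.le]
    exact fun v hv => (Ifun_contAt hH (lt_of_le_of_lt hv.2 hx1)).continuousWithinAt
  -- derivative of g on (0,x)
  have hdg : ∀ v ∈ Set.Ioo (0:ℝ) x, HasDerivAt g ((H-1/2) * f1 v + 4*H * f2 v) v := by
    intro v hv
    have hv0 : 0 < v := hv.1
    have h1v : 0 < 1 - v := by have := hv.2; linarith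
    have hA : HasDerivAt (fun v : ℝ => v ^ (H-1/2)) ((H-1/2) * v ^ (H-1/2-1)) v :=
      Real.hasDerivAt_rpow_const (Or.inl hv0.ne')
    have hB : HasDerivAt (fun v : ℝ => 1 + v) 1 v := (hasDerivAt_id v).const_add 1
    have hC : HasDerivAt (fun v : ℝ => (1-v) ^ (-2*H))
        ((-2*H) * (1-v) ^ (-2*H-1) * (-1)) v := by
      exact (Real.hasDerivAt_rpow_const (x := 1-v) (p := -2*H) (Or.inl h1v.ne')).comp v
        ((hasDerivAt_id v).const_sub 1)
    have h := (hA.mul hB).mul hC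
    have heq : ((H-1/2) * v ^ (H-1/2-1) * (1+v) + v ^ (H-1/2) * 1) * (1-v) ^ (-2*H)
        + v ^ (H-1/2) * (1+v) * ((-2*H) * (1-v) ^ (-2*H-1) * (-1))
        = (H-1/2) * f1 v + 4*H * f2 v := by
      simp only [hf1, hf2]
      rw [show (H-1/2:ℝ) = (H-1/2-1)+1 by ring, Real.rpow_add_one hv0.ne',
        show (H-1/2-1+1-1:ℝ) = H-1/2-1 by ring,
        show (-2*H:ℝ) = (-2*H-1)+1 by ring, Real.rpow_add_one h1v.ne',
        show (-2*H-1+1-1:ℝ) = -2*H-1 by ring,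
        show (2-2*H-1:ℝ) = ((-2*H-1)+1)+1 by ring, Real.rpow_add_one h1v.ne',
        Real.rpow_add_one h1v.ne']
      ring
    rw [← heq]
    exact h
  have hcg : ContinuousOn g (Set.Icc 0 x) := by
    intro v hv
    have hv1 : v < 1 := lt_of_le_of_lt hv.2 hx1
    have h1v : (1:ℝ) - v ≠ 0 := by linarith
    apply ContinuousAt.continuousWithinAt
    exact ((Real.continuousAt_rpow_const v _ (Or.inr (by linarith))).mul
        ((continuous_const.add continuous_id).continuousAt)).mul
      ((Real.continuousAt_rpow_const (1-v) _ (Or.inl h1v)).comp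
        ((continuous_const.sub continuous_id).continuousAt))
  have ftc := intervalIntegral.integral_eq_sub_of_hasDeriv_right_of_le hx0.le hcg
    (fun v hv => (hdg v hv).hasDerivWithinAt) (i1.add i2)
  have hg0 : g 0 = 0 := by
    simp only [hg]
    rw [Real.zero_rpow (by linarith : H - 1/2 ≠ 0)]
    ring
  rw [hg0, sub_zero, intervalIntegral.integral_add i1 i2,
    intervalIntegral.integral_const_mul, intervalIntegral.integral_const_mul] at ftc
  simpa only [hf1, hf2, hg, incBeta, Ifun] using ftc

noncomputable def fI (H x : ℝ) : ℝ := x ^ (H-1/2) * (1-x) ^ (-2*H-1)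

noncomputable def D1 (H s t : ℝ) : ℝ :=
  2*H * ((2*H*(t-s) ^ (2*H-1) * (-1)) * Ifun H (s/t) + (t-s) ^ (2*H) * (fI H (s/t) * (1/t)))

lemma deriv_inner {H s t : ℝ} (hH : 1/2 < H) (hs : 0 < s) (hst : s < t) :
    deriv (fun s' => R H s' t) s = D1 H s t := by
  have ht0 : (0:ℝ) < t := hs.trans hst
  have hts : (0:ℝ) < t - s := by linarith
  have hx0 : 0 < s/t := by positivity
  have hx1 : s/t < 1 := (div_lt_one ht0).mpr hst
  have h1 : HasDerivAt (fun s' : ℝ => (t-s') ^ (2*H)) (2*H*(t-s) ^ (2*H-1) * (-1)) s := by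
    exact (Real.hasDerivAt_rpow_const (x := t-s) (p := 2*H) (Or.inl hts.ne')).comp s
      ((hasDerivAt_id s).const_sub t)
  have h2 : HasDerivAt (fun s' : ℝ => Ifun H (s'/t)) (fI H (s/t) * (1/t)) s := by
    have := (Ifun_hasDerivAt hH hx0 hx1).comp s ((hasDerivAt_id s).div_const t); exact this
  have hF : HasDerivAt (fun s' : ℝ => 2*H * ((t-s') ^ (2*H) * Ifun H (s'/t))) (D1 H s t) s := by
    have := (h1.mul h2).const_mul (2*H)
    rw [D1]
    exact this
  have hev : (fun s' => R H s' t) =ᶠ[nhds s]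
      (fun s' : ℝ => 2*H * ((t-s') ^ (2*H) * Ifun H (s'/t))) := by
    filter_upwards [Ioo_mem_nhds hs hst] with s' hs'
    exact closed_form hH hs'.1 hs'.2
  rw [hev.deriv_eq, hF.deriv]

theorem stmt0 (H s t : ℝ) (hH : 1/2 < H) (hH1 : H < 1) (hs : 0 < s) (hst : s < t) :
    deriv (fun t' => deriv (fun s' => R H s' t') s) t
      = 2*H*(H - 1/2)^2 * (t - s) ^ (2*H - 2) * incBeta (s/t) (H - 1/2) (2 - 2*H) := by
  have ht0 : (0:ℝ) < t := hs.trans hst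
  have hts : (0:ℝ) < t - s := by linarith
  have hx0 : 0 < s/t := by positivity
  have hx1 : s/t < 1 := (div_lt_one ht0).mpr hst
  have ha : (0:ℝ) < H - 1/2 := by linarith
  have h1x : (0:ℝ) < 1 - s/t := by linarith
  have hev : (fun t' => deriv (fun s' => R H s' t') s) =ᶠ[nhds t] (fun t' => D1 H s t') := by
    filter_upwards [Ioi_mem_nhds hst] with t' ht'
    exact deriv_inner hH hs ht'
  rw [hev.deriv_eq]
  have hx : HasDerivAt (fun t' : ℝ => s/t') (-(s/t^2)) t := by
    have h := (hasDerivAt_const t s).div (hasDerivAt_id t) ht0.ne'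
    simp only [id_eq] at h
    exact h.congr_deriv (by ring)
  have hg1 : HasDerivAt (fun t' : ℝ => 2*H*(t'-s) ^ (2*H-1) * (-1))
      ((2*H*((2*H-1)*(t-s) ^ (2*H-1-1))) * (-1)) t := by
    have hr : HasDerivAt (fun t' : ℝ => (t'-s) ^ (2*H-1)) ((2*H-1)*(t-s) ^ (2*H-1-1)) t := by
      have := (Real.hasDerivAt_rpow_const (x := t-s) (p := 2*H-1) (Or.inl hts.ne')).comp t
        ((hasDerivAt_id t).sub_const s)
      simpa [Function.comp_def] using this
    exact (hr.const_mul (2*H)).mul_const (-1)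
  have hg2 : HasDerivAt (fun t' : ℝ => Ifun H (s/t'))
      (((s/t) ^ (H-1/2) * (1-s/t) ^ (-2*H-1)) * (-(s/t^2))) t :=
    (Ifun_hasDerivAt hH hx0 hx1).comp t hx
  have hg3 : HasDerivAt (fun t' : ℝ => (t'-s) ^ (2*H)) (2*H*(t-s) ^ (2*H-1)) t := by
    have := (Real.hasDerivAt_rpow_const (x := t-s) (p := 2*H) (Or.inl hts.ne')).comp t
      ((hasDerivAt_id t).sub_const s)
    simpa [Function.comp_def] using this
  have hA : HasDerivAt (fun t' : ℝ => (s/t') ^ (H-1/2))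
      (((H-1/2)*(s/t) ^ (H-1/2-1)) * (-(s/t^2))) t :=
    (Real.hasDerivAt_rpow_const (x := s/t) (p := H-1/2) (Or.inl hx0.ne')).comp t hx
  have hB : HasDerivAt (fun t' : ℝ => (1-s/t') ^ (-2*H-1))
      (((-2*H-1)*(1-s/t) ^ (-2*H-1-1)) * (-(-(s/t^2)))) t := by
    have := (Real.hasDerivAt_rpow_const (x := 1-s/t) (p := -2*H-1) (Or.inl h1x.ne')).comp t
      (hx.const_sub 1); exact this
  have hC : HasDerivAt (fun t' : ℝ => 1/t') (-(1/t^2)) t := by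
    simpa [one_div] using hasDerivAt_inv ht0.ne'
  have htot := ((hg1.mul hg2).add (hg3.mul ((hA.mul hB).mul hC))).const_mul (2*H)
  have hD : deriv (fun t' => D1 H s t') t = _ := HasDerivAt.deriv (by simpa only [D1, fI, Pi.mul_apply, Pi.add_apply] using htot)
  rw [hD]
  have hstar := beta_id hH hx0 hx1
  have e1 : (t-s) ^ (2*H-1-1) = (t-s) ^ (2*H-2) := by congr 1; ring
  have e2 : (t-s) ^ (2*H-1) = (t-s) ^ (2*H-2) * (t-s) := by
    rw [← Real.rpow_add_one hts.ne' (2*H-2)]; congr 1; ring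
  have e3 : (t-s) ^ (2*H) = (t-s) ^ (2*H-2) * (t-s) * (t-s) := by
    rw [← Real.rpow_add_one hts.ne' (2*H-2), ← Real.rpow_add_one hts.ne' (2*H-2+1)]
    congr 1; ring
  have e4 : (s/t) ^ (H-1/2) = (s/t) ^ (H-1/2-1) * (s/t) := by
    rw [← Real.rpow_add_one hx0.ne' (H-1/2-1)]; congr 1; ring
  have e5 : (1-s/t) ^ (-2*H-1-1) = (1-s/t) ^ (-2*H-2) := by congr 1; ring
  have e6 : (1-s/t) ^ (-2*H-1) = (1-s/t) ^ (-2*H-2) * (1-s/t) := by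
    rw [← Real.rpow_add_one h1x.ne' (-2*H-2)]; congr 1; ring
  have e7 : (1-s/t) ^ (-2*H) = (1-s/t) ^ (-2*H-2) * (1-s/t) * (1-s/t) := by
    rw [← Real.rpow_add_one h1x.ne' (-2*H-2), ← Real.rpow_add_one h1x.ne' (-2*H-2+1)]
    congr 1; ring
  rw [e1, e2, e3, e4, e5, e6]
  rw [e4, e7] at hstar
  set P := (t-s) ^ (2*H-2) with hP
  set X := (s/t) ^ (H-1/2-1) with hX
  set Q := (1-s/t) ^ (-2*H-2) with hQ
  set Iv := Ifun H (s/t) with hIv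
  set J := incBeta (s/t) (H-1/2) (2-2*H) with hJat
  field_simp at hstar ⊢
  linear_combination (P*(1-2*H)) * hstar
end

section
/- Let 0 < α < 1/2, T > 0, and g ∈ L^p[0,T] with p > 2/(1+2α). For ε > 0 define F_ε(u) = (1/ε)∫_{u−ε}^{u} g(t)·(t+ε−u)^α dt for 0 < u < T (with g extended by zero outside [0,T]). Then ∫₀^T |F_ε(u)|² du → 0 as ε ↓ 0. -/
open MeasureTheory Real
open scoped ENNReal NNReal


lemma young_ptwise (x y : ℝ≥0∞) {p₀ r a₂ a₃ : ℝ} (hp₀ : 0 ≤ p₀) (hr : 0 ≤ r)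
    (ha₂ : 0 ≤ a₂) (ha₃ : 0 ≤ a₃)
    (hx : p₀ * (1/2) + p₀ * a₂ = 1) (hy : r * (1/2) + r * a₃ = 1) :
    x * y = (x ^ p₀ * y ^ r) ^ (1/2 : ℝ) * (x ^ p₀) ^ a₂ * (y ^ r) ^ a₃ := by
  rw [ENNReal.mul_rpow_of_nonneg _ _ (by norm_num : (0:ℝ) ≤ 1/2),
    ← ENNReal.rpow_mul, ← ENNReal.rpow_mul, ← ENNReal.rpow_mul, ← ENNReal.rpow_mul]
  have : x ^ (p₀ * (1/2)) * y ^ (r * (1/2)) * x ^ (p₀ * a₂) * y ^ (r * a₃)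
      = (x ^ (p₀ * (1/2)) * x ^ (p₀ * a₂)) * (y ^ (r * (1/2)) * y ^ (r * a₃)) := by ring
  rw [this, ← ENNReal.rpow_add_of_nonneg _ _ (by positivity) (by positivity),
    ← ENNReal.rpow_add_of_nonneg _ _ (by positivity) (by positivity), hx, hy,
    ENNReal.rpow_one, ENNReal.rpow_one]

lemma young_step {μ : Measure ℝ} {f k : ℝ → ℝ≥0∞} (hf : Measurable f) (hk : Measurable k)
    {p₀ r a₂ a₃ : ℝ} (hp₀ : 0 ≤ p₀) (hr : 0 ≤ r) (ha₂ : 0 ≤ a₂) (ha₃ : 0 ≤ a₃)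
    (hsum : 1/2 + a₂ + a₃ = 1) (hx : p₀ * (1/2) + p₀ * a₂ = 1) (hy : r * (1/2) + r * a₃ = 1) :
    ∫⁻ t, f t * k t ∂μ ≤ (∫⁻ t, f t ^ p₀ * k t ^ r ∂μ) ^ (1/2:ℝ) *
      (∫⁻ t, f t ^ p₀ ∂μ) ^ a₂ * (∫⁻ t, k t ^ r ∂μ) ^ a₃ := by
  have h := ENNReal.lintegral_prod_norm_pow_le (μ := μ) (Finset.univ : Finset (Fin 3))
    (f := ![fun t => f t ^ p₀ * k t ^ r, fun t => f t ^ p₀, fun t => k t ^ r])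
    (p := ![1/2, a₂, a₃])
    (by
      intro i _
      fin_cases i
      · exact ((hf.pow_const _).mul (hk.pow_const _)).aemeasurable
      · exact (hf.pow_const _).aemeasurable
      · exact (hk.pow_const _).aemeasurable)
    (by simp [Fin.sum_univ_three]; linarith)
    (by
      intro i _
      fin_cases i
      · norm_num
      · exact ha₂
      · exact ha₃)
  simp only [Fin.prod_univ_three, Matrix.cons_val_zero, Matrix.cons_val_one, Matrix.head_cons,
    Matrix.cons_val_two, Matrix.tail_cons] at h
  calc ∫⁻ t, f t * k t ∂μ
      = ∫⁻ t, (f t ^ p₀ * k t ^ r) ^ (1/2:ℝ) * (f t ^ p₀) ^ a₂ * (k t ^ r) ^ a₃ ∂μ := by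
        refine lintegral_congr fun t => young_ptwise _ _ hp₀ hr ha₂ ha₃ hx hy
    _ ≤ _ := h

lemma Ir_eq {ε a r : ℝ} (hε : 0 < ε) (ha : 0 < a) (hr : 0 < r) :
    ∫⁻ s, ((Set.Ico (0:ℝ) ε).indicator (fun s => ENNReal.ofReal ((ε - s) ^ a)) s) ^ r
      = ENNReal.ofReal (ε ^ (a*r+1) / (a*r+1)) := by
  have har : 0 < a * r := mul_pos ha hr
  have h1 : ∀ s, ((Set.Ico (0:ℝ) ε).indicator (fun s => ENNReal.ofReal ((ε - s) ^ a)) s) ^ r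
      = (Set.Ico (0:ℝ) ε).indicator (fun s => ENNReal.ofReal ((ε - s) ^ a) ^ r) s := by
    intro s; by_cases hs : s ∈ Set.Ico (0:ℝ) ε
    · simp [Set.indicator_of_mem hs]
    · simp [Set.indicator_of_notMem hs, ENNReal.zero_rpow_of_pos hr]
  simp_rw [h1]
  rw [lintegral_indicator measurableSet_Ico]
  have h2 : ∫⁻ s in Set.Ico 0 ε, ENNReal.ofReal ((ε-s)^a) ^ r
      = ∫⁻ s in Set.Ico 0 ε, ENNReal.ofReal ((ε-s)^(a*r)) := by
    refine setLIntegral_congr_fun measurableSet_Ico (fun s hs => ?_)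
    have h0 : (0:ℝ) ≤ ε - s := by linarith [hs.2]
    rw [ENNReal.ofReal_rpow_of_nonneg (Real.rpow_nonneg h0 a) hr.le, ← Real.rpow_mul h0]
  rw [h2, Measure.restrict_congr_set Ico_ae_eq_Ioc]
  have hcont : Continuous fun s : ℝ => (ε - s) ^ (a*r) := by
    rw [continuous_iff_continuousAt]; intro s
    exact (Real.continuousAt_rpow_const _ _ (Or.inr har.le)).comp
      ((continuous_const.sub continuous_id).continuousAt)
  have h4 : ∫⁻ s in Set.Ioc 0 ε, ENNReal.ofReal ((ε-s)^(a*r))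
      = ENNReal.ofReal (∫ s in Set.Ioc 0 ε, (ε-s)^(a*r)) := by
    rw [ofReal_integral_eq_lintegral_ofReal hcont.integrableOn_Ioc
      (ae_restrict_of_forall_mem measurableSet_Ioc fun s hs =>
        Real.rpow_nonneg (by linarith [hs.2]) _)]
  rw [h4]
  congr 1
  rw [← intervalIntegral.integral_of_le hε.le,
    intervalIntegral.integral_comp_sub_left (fun x => x ^ (a*r)) ε]
  simp only [sub_self, sub_zero]
  rw [integral_rpow (Or.inl (by linarith)), Real.zero_rpow (by linarith)]
  ring

lemma lint_sub_left {k : ℝ → ℝ≥0∞} (hk : Measurable k) (u : ℝ) :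
    ∫⁻ t, k (u - t) = ∫⁻ s, k s := by
  have h := ((measurePreserving_add_left (volume : Measure ℝ) u).comp
    (Measure.measurePreserving_neg volume)).lintegral_comp hk
  simpa [Function.comp_def, sub_eq_add_neg] using h

lemma conv_lintegral {f k : ℝ → ℝ≥0∞} (hf : Measurable f) (hk : Measurable k) :
    ∫⁻ u, ∫⁻ t, f t * k (u - t) = (∫⁻ t, f t) * (∫⁻ s, k s) := by
  rw [lintegral_lintegral_swap
    (((hf.comp measurable_snd).mul (hk.comp (measurable_fst.sub measurable_snd))).aemeasurable)]
  have h1 : ∀ t, ∫⁻ u, f t * k (u - t) ∂volume = f t * ∫⁻ s, k s ∂volume := by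
    intro t
    rw [lintegral_const_mul _
      (show Measurable fun u : ℝ => k (u - t) from hk.comp (measurable_id.sub measurable_const))]
    congr 1
    have h2 := (measurePreserving_add_right (volume : Measure ℝ) (-t)).lintegral_comp hk
    simpa [Function.comp_def, sub_eq_add_neg] using h2
  simp_rw [h1]
  rw [lintegral_mul_const _ hf]

lemma young_bound {G K : ℝ → ℝ≥0∞} (hG : Measurable G) (hK : Measurable K)
    {p₀ r a₂ a₃ : ℝ} (hp₀ : 0 ≤ p₀) (hr : 0 ≤ r) (ha₂ : 0 ≤ a₂) (ha₃ : 0 ≤ a₃)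
    (hsum : 1/2 + a₂ + a₃ = 1) (hx : p₀ * (1/2) + p₀ * a₂ = 1) (hy : r * (1/2) + r * a₃ = 1)
    {S : Set ℝ} :
    ∫⁻ u in S, (∫⁻ t, G t * K (u - t)) ^ 2
      ≤ (∫⁻ t, G t ^ p₀) ^ (2*a₂+1) * (∫⁻ s, K s ^ r) ^ (2*a₃+1) := by
  set Ip := ∫⁻ t, G t ^ p₀ with hIp
  set Ir := ∫⁻ s, K s ^ r with hIr
  have hKu : ∀ u : ℝ, Measurable fun t => K (u - t) := fun u =>
    hK.comp (measurable_const.sub measurable_id)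
  have htr : ∀ u : ℝ, (∫⁻ t, K (u - t) ^ r) = Ir := fun u =>
    lint_sub_left (hK.pow_const r) u
  have hX : ∀ u : ℝ, (∫⁻ t, G t * K (u - t))
      ≤ (∫⁻ t, G t ^ p₀ * K (u - t) ^ r) ^ (1/2:ℝ) * Ip ^ a₂ * Ir ^ a₃ := by
    intro u
    have h := young_step (μ := volume) hG (hKu u) hp₀ hr ha₂ ha₃ hsum hx hy
    rwa [htr u] at h
  have hsq : ∀ (z : ℝ≥0∞) (e : ℝ), (z ^ e) ^ 2 = z ^ (2*e) := by
    intro z e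
    rw [← ENNReal.rpow_natCast (z ^ e) 2, ← ENNReal.rpow_mul]
    ring_nf
  have hX2 : ∀ u : ℝ, (∫⁻ t, G t * K (u - t)) ^ 2
      ≤ (∫⁻ t, G t ^ p₀ * K (u - t) ^ r) * Ip ^ (2*a₂) * Ir ^ (2*a₃) := by
    intro u
    calc (∫⁻ t, G t * K (u - t)) ^ 2
        ≤ ((∫⁻ t, G t ^ p₀ * K (u - t) ^ r) ^ (1/2:ℝ) * Ip ^ a₂ * Ir ^ a₃) ^ 2 := by
          gcongr
          exact hX u
      _ = (∫⁻ t, G t ^ p₀ * K (u - t) ^ r) * Ip ^ (2*a₂) * Ir ^ (2*a₃) := by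
          rw [mul_pow, mul_pow, hsq, hsq, hsq]
          norm_num [ENNReal.rpow_one]
  calc ∫⁻ u in S, (∫⁻ t, G t * K (u - t)) ^ 2
      ≤ ∫⁻ u in S, (∫⁻ t, G t ^ p₀ * K (u - t) ^ r) * Ip ^ (2*a₂) * Ir ^ (2*a₃) :=
        lintegral_mono fun u => hX2 u
    _ ≤ ∫⁻ u, (∫⁻ t, G t ^ p₀ * K (u - t) ^ r) * Ip ^ (2*a₂) * Ir ^ (2*a₃) :=
        setLIntegral_le_lintegral _ _
    _ = (∫⁻ u, ∫⁻ t, G t ^ p₀ * K (u - t) ^ r) * Ip ^ (2*a₂) * Ir ^ (2*a₃) := by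
        have hYm : Measurable fun u : ℝ => ∫⁻ t, G t ^ p₀ * K (u - t) ^ r :=
          Measurable.lintegral_prod_right'
            (((hG.comp measurable_snd).pow_const p₀).mul
              ((hK.comp (measurable_fst.sub measurable_snd)).pow_const r))
        rw [lintegral_mul_const _ (hYm.mul_const _), lintegral_mul_const _ hYm]
    _ = (Ip * Ir) * Ip ^ (2*a₂) * Ir ^ (2*a₃) := by
        have hconv : (∫⁻ u, ∫⁻ t, G t ^ p₀ * K (u - t) ^ r) = Ip * Ir :=
          conv_lintegral (hG.pow_const p₀) (hK.pow_const r)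
        rw [hconv]
    _ = Ip ^ (2*a₂+1) * Ir ^ (2*a₃+1) := by
        rw [ENNReal.rpow_add_of_nonneg (x := Ip) _ _ (by linarith) zero_le_one,
          ENNReal.rpow_add_of_nonneg (x := Ir) _ _ (by linarith) zero_le_one,
          ENNReal.rpow_one, ENNReal.rpow_one]
        ring


theorem stmt3 (α T p : ℝ) (g : ℝ → ℝ) (hα0 : 0 < α) (hα : α < 1/2) (hT : 0 < T)
    (hp : 2/(1+2*α) < p)
    (hsupp : ∀ t, t ∉ Set.Icc (0:ℝ) T → g t = 0)
    (hg : MemLp g (ENNReal.ofReal p) volume) :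
    Filter.Tendsto
      (fun ε => ∫ u in (0:ℝ)..T, ((1/ε) * ∫ t in (u-ε)..u, g t * (t + ε - u) ^ α)^2)
      (nhdsWithin 0 (Set.Ioi 0)) (nhds 0) := by
  have hα2 : (0:ℝ) < 1 + 2*α := by linarith
  have h2lt1 : (1:ℝ) < 2/(1+2*α) := by
    rw [lt_div_iff₀ hα2]; linarith
  set p₀ := min p 2 with hp₀def
  have hp₀le2 : p₀ ≤ 2 := min_le_right _ _
  have hp₀lep : p₀ ≤ p := min_le_left _ _
  have hp₀gt : 2/(1+2*α) < p₀ := lt_min hp (by rw [div_lt_iff₀ hα2]; nlinarith)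
  have hp₀1 : 1 < p₀ := h2lt1.trans hp₀gt
  have hp₀pos : 0 < p₀ := by linarith
  have hhalf : 1/2 ≤ 1/p₀ := by
    rw [div_le_div_iff₀ (by norm_num) hp₀pos]; linarith
  have hinv1 : 1/p₀ < 1 := by rw [div_lt_one hp₀pos]; exact hp₀1
  have hinvlt : 1/p₀ < α + 1/2 := by
    have h := one_div_lt_one_div_of_lt (by positivity : (0:ℝ) < 2/(1+2*α)) hp₀gt
    rw [one_div_div] at h
    linarith
  set ir := 3/2 - 1/p₀ with hirdef
  have hirpos : 0 < ir := by rw [hirdef]; linarith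
  set r := ir⁻¹ with hrdef
  have hrpos : 0 < r := inv_pos.mpr hirpos
  have hrir : r * ir = 1 := inv_mul_cancel₀ hirpos.ne'
  set a₂ := 1/p₀ - 1/2 with ha₂def
  have ha₂ : 0 ≤ a₂ := by rw [ha₂def]; linarith
  set a₃ := 1 - 1/p₀ with ha₃def
  have ha₃ : 0 ≤ a₃ := by rw [ha₃def]; linarith
  have hsum : 1/2 + a₂ + a₃ = 1 := by rw [ha₂def, ha₃def]; ring
  have hxid : p₀ * (1/2) + p₀ * a₂ = 1 := by
    rw [ha₂def]
    field_simp
    ring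
  have hyid : r * (1/2) + r * a₃ = 1 := by
    have h1 : (1:ℝ)/2 + a₃ = ir := by rw [ha₃def, hirdef]; ring
    calc r * (1/2) + r * a₃ = r * (1/2 + a₃) := by ring
      _ = r * ir := by rw [h1]
      _ = 1 := hrir
  set δ := 2*α + 2*ir - 2 with hδdef
  have hδpos : 0 < δ := by rw [hδdef, hirdef]; linarith
  -- measurable representative
  have hgm := hg.aestronglyMeasurable
  set g' : ℝ → ℝ := hgm.mk g with hg'def
  have hg'sm : StronglyMeasurable g' := hgm.stronglyMeasurable_mk
  have hgg' : g =ᵐ[volume] g' := hgm.ae_eq_mk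
  set G : ℝ → ℝ≥0∞ := fun t => (‖g' t‖₊ : ℝ≥0∞) with hGdef
  have hGm : Measurable G := hg'sm.measurable.nnnorm.coe_nnreal_ennreal
  set Ip := ∫⁻ t, G t ^ p₀ with hIpdef
  have hIp : Ip ≠ ⊤ := by
    have hsupfin : volume (Set.Icc (0:ℝ) T) ≠ ⊤ := by
      rw [Real.volume_Icc]; exact ENNReal.ofReal_ne_top
    have hg₀ : MemLp g (ENNReal.ofReal p₀) volume :=
      hg.mono_exponent_of_measure_support_ne_top hsupp hsupfin
        (ENNReal.ofReal_le_ofReal hp₀lep)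
    have hlt := lintegral_rpow_enorm_lt_top_of_eLpNorm_lt_top
      (p := ENNReal.ofReal p₀)
      (by simp only [ne_eq, ENNReal.ofReal_eq_zero, not_le]; linarith)
      ENNReal.ofReal_ne_top hg₀.2
    rw [ENNReal.toReal_ofReal hp₀pos.le] at hlt
    have heq : Ip = ∫⁻ a, ‖g a‖ₑ ^ p₀ := by
      refine lintegral_congr_ae ?_
      filter_upwards [hgg'] with t ht
      simp [hGdef, ht]
      rfl
    rw [heq]; exact hlt.ne
  set C := Ip.toReal ^ (2/p₀) * ((α*r+1)⁻¹) ^ (2*ir) with hCdef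
  have har1 : (0:ℝ) < α*r+1 := by positivity
  -- main per-ε bound
  have key : ∀ ε : ℝ, 0 < ε →
      |∫ u in (0:ℝ)..T, ((1/ε) * ∫ t in (u-ε)..u, g t * (t + ε - u) ^ α)^2| ≤ C * ε ^ δ := by
    intro ε hε
    set K : ℝ → ℝ≥0∞ :=
      (Set.Ico (0:ℝ) ε).indicator (fun s => ENNReal.ofReal ((ε - s)^α)) with hKdef
    have hKsm : Measurable fun s : ℝ => ENNReal.ofReal ((ε - s)^α) := by
      apply ENNReal.measurable_ofReal.comp
      apply Continuous.measurable
      rw [continuous_iff_continuousAt]; intro s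
      exact (Real.continuousAt_rpow_const _ _ (Or.inr hα0.le)).comp
        ((continuous_const.sub continuous_id).continuousAt)
    have hKm : Measurable K := hKsm.indicator measurableSet_Ico
    set Ir := ∫⁻ s, K s ^ r with hIrdef
    have hIrval : Ir = ENNReal.ofReal (ε ^ (α*r+1) / (α*r+1)) := by
      rw [hIrdef, hKdef]; exact Ir_eq hε hα0 hrpos
    have hcong : ∀ u : ℝ, (∫ t in (u-ε)..u, g t * (t + ε - u) ^ α)
        = ∫ t in (u-ε)..u, g' t * (t + ε - u) ^ α := by
      intro u
      apply intervalIntegral.integral_congr_ae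
      filter_upwards [hgg'] with t ht _
      rw [ht]
    have hFX : ∀ u : ℝ, ENNReal.ofReal ‖((1/ε) * ∫ t in (u-ε)..u, g' t * (t + ε - u) ^ α)^2‖
        ≤ ENNReal.ofReal (1/ε) ^ 2 * (∫⁻ t, G t * K (u - t)) ^ 2 := by
      intro u
      have hle : u - ε ≤ u := by linarith
      have hI : ENNReal.ofReal ‖∫ t in Set.Ioc (u-ε) u, g' t * (t + ε - u) ^ α‖
          ≤ ∫⁻ t, G t * K (u - t) := by
        refine le_trans (ENNReal.ofReal_le_ofReal (norm_integral_le_lintegral_norm _)) ?_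
        refine le_trans ENNReal.ofReal_toReal_le ?_
        have heq : (∫⁻ t in Set.Ioc (u-ε) u, ENNReal.ofReal ‖g' t * (t + ε - u) ^ α‖)
            = ∫⁻ t in Set.Ioc (u-ε) u, G t * K (u - t) := by
          refine setLIntegral_congr_fun measurableSet_Ioc (fun t ht => ?_)
          have h1 : 0 < t + ε - u := by have := ht.1; linarith
          have h2 : u - t ∈ Set.Ico (0:ℝ) ε := ⟨by have := ht.2; linarith, by have := ht.1; linarith⟩
          rw [norm_mul, ENNReal.ofReal_mul (norm_nonneg _), ofReal_norm, enorm_eq_nnnorm]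
          congr 1
          rw [hKdef]
          rw [Set.indicator_of_mem h2, show ε - (u - t) = t + ε - u by ring,
            Real.norm_eq_abs, abs_of_nonneg (Real.rpow_nonneg h1.le α)]
        rw [heq]
        exact setLIntegral_le_lintegral _ _
      rw [intervalIntegral.integral_of_le hle]
      rw [norm_pow, norm_mul, ENNReal.ofReal_pow (by positivity),
        ENNReal.ofReal_mul (norm_nonneg _), Real.norm_eq_abs (1/ε),
        abs_of_pos (by positivity : (0:ℝ) < 1/ε), mul_pow]
      gcongr
    have hmain : (∫⁻ u in Set.Ioc (0:ℝ) T,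
          ENNReal.ofReal ‖((1/ε) * ∫ t in (u-ε)..u, g' t * (t + ε - u) ^ α)^2‖)
        ≤ ENNReal.ofReal (1/ε) ^ 2 * (Ip ^ (2*a₂+1) * Ir ^ (2*a₃+1)) := by
      have hYm : Measurable fun u : ℝ => (∫⁻ t, G t * K (u - t)) ^ 2 :=
        (Measurable.lintegral_prod_right'
          ((hGm.comp measurable_snd).mul
            (hKm.comp (measurable_fst.sub measurable_snd)))).pow_const 2
      calc (∫⁻ u in Set.Ioc (0:ℝ) T,
            ENNReal.ofReal ‖((1/ε) * ∫ t in (u-ε)..u, g' t * (t + ε - u) ^ α)^2‖)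
          ≤ ∫⁻ u in Set.Ioc (0:ℝ) T,
              ENNReal.ofReal (1/ε) ^ 2 * (∫⁻ t, G t * K (u - t)) ^ 2 :=
            lintegral_mono fun u => hFX u
        _ = ENNReal.ofReal (1/ε) ^ 2 * ∫⁻ u in Set.Ioc (0:ℝ) T, (∫⁻ t, G t * K (u - t)) ^ 2 :=
            lintegral_const_mul _ hYm
        _ ≤ ENNReal.ofReal (1/ε) ^ 2 * (Ip ^ (2*a₂+1) * Ir ^ (2*a₃+1)) := by
            gcongr
            exact young_bound hGm hKm hp₀pos.le hrpos.le ha₂ ha₃ hsum hxid hyid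
    have hBne : ENNReal.ofReal (1/ε) ^ 2 * (Ip ^ (2*a₂+1) * Ir ^ (2*a₃+1)) ≠ ⊤ := by
      apply ENNReal.mul_ne_top (ENNReal.pow_ne_top ENNReal.ofReal_ne_top)
      exact ENNReal.mul_ne_top
        (ENNReal.rpow_ne_top_of_nonneg (by linarith) hIp)
        (by rw [hIrval]; exact ENNReal.rpow_ne_top_of_nonneg (by linarith) ENNReal.ofReal_ne_top)
    have habs : |∫ u in (0:ℝ)..T, ((1/ε) * ∫ t in (u-ε)..u, g t * (t + ε - u) ^ α)^2|
        ≤ (ENNReal.ofReal (1/ε) ^ 2 * (Ip ^ (2*a₂+1) * Ir ^ (2*a₃+1))).toReal := by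
      simp only [hcong]
      rw [intervalIntegral.integral_of_le hT.le, ← Real.norm_eq_abs]
      exact le_trans (norm_integral_le_lintegral_norm _) (ENNReal.toReal_mono hBne hmain)
    refine le_trans habs (le_of_eq ?_)
    -- arithmetic
    have he₂ : 2*a₂+1 = 2/p₀ := by rw [ha₂def]; ring
    have he₃ : 2*a₃+1 = 2*ir := by rw [ha₃def, hirdef]; ring
    rw [he₂, he₃, hIrval]
    rw [ENNReal.toReal_mul, ENNReal.toReal_pow, ENNReal.toReal_ofReal (by positivity),
      ENNReal.toReal_mul, ← ENNReal.toReal_rpow, ← ENNReal.toReal_rpow,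
      ENNReal.toReal_ofReal (by positivity)]
    have hε2 : ((1:ℝ)/ε)^2 = ε ^ (-2:ℝ) := by
      rw [one_div, inv_pow, Real.rpow_neg hε.le, ← Real.rpow_natCast ε 2]
      norm_num
    have hmulε : ε ^ (-2:ℝ) * (ε ^ (α*r+1)) ^ (2*ir) = ε ^ δ := by
      rw [← Real.rpow_mul hε.le, ← Real.rpow_add hε]
      congr 1
      rw [show (α*r+1) * (2*ir) = 2*α*(r*ir) + 2*ir by ring, hrir, hδdef]
      ring
    rw [hCdef, div_eq_mul_inv (ε ^ (α*r+1)) (α*r+1),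
      Real.mul_rpow (by positivity) (by positivity), hε2]
    linear_combination (Ip.toReal ^ (2/p₀) * ((α*r+1)⁻¹) ^ (2*ir)) * hmulε
  -- conclusion
  have h0 : Filter.Tendsto (fun ε : ℝ => C * ε ^ δ) (nhdsWithin 0 (Set.Ioi 0)) (nhds 0) := by
    have h1 : Filter.Tendsto (fun ε : ℝ => ε ^ δ) (nhds 0) (nhds ((0:ℝ) ^ δ)) :=
      (Real.continuousAt_rpow_const 0 δ (Or.inr hδpos.le)).tendsto
    rw [Real.zero_rpow hδpos.ne'] at h1
    have h2 : Filter.Tendsto (fun ε : ℝ => C * ε ^ δ) (nhdsWithin 0 (Set.Ioi 0)) (nhds (C * 0)) :=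
      (h1.mono_left (nhdsWithin_le_nhds (s := Set.Ioi 0))).const_mul C
    simpa using h2
  refine tendsto_of_tendsto_of_tendsto_of_le_of_le' tendsto_const_nhds h0 ?_ ?_
  · exact Filter.Eventually.of_forall fun ε =>
      intervalIntegral.integral_nonneg hT.le fun u _ => sq_nonneg _
  · filter_upwards [self_mem_nhdsWithin] with ε hε
    exact (le_abs_self _).trans (key ε hε)
end

section
/- Let 1/2 < H < 1 and 1 ≤ q < 2/(3/2 − H). Then ∫_{[0,T]²} ∫₀^{x₁∧x₂} (∫₀^r (x₁−s)^{q(H−1)}(x₂−s)^{q(H−3/2)} ds) dr dx₁ dx₂ < ∞ (for q ≥ 2), and the analogous integral with the inner integral replaced by (∫₀^r (x₁−s)^{2(H−1)}(x₂−s)^{2(H−3)} ds)^{q/2} is finite for 1 ≤ q ≤ 2; in particular the uniform bounds on 𝐃^ε are integrable over the simplex. -/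
open MeasureTheory Real

open Set

-- integrability of t ↦ (v - t)^c on Ioc u v
lemma intOn_sub_left {c u v : ℝ} (hc : -1 < c) (huv : u ≤ v) :
    IntegrableOn (fun t => (v - t) ^ c) (Set.Ioc u v) := by
  rw [← intervalIntegrable_iff_integrableOn_Ioc_of_le huv]
  have h := (intervalIntegral.intervalIntegrable_rpow' (a := v - u) (b := v - v)
    hc).comp_sub_left v
  simpa using h

lemma intOn_sub_right {c u v : ℝ} (hc : -1 < c) (huv : u ≤ v) :
    IntegrableOn (fun t => (t - u) ^ c) (Set.Ioc u v) := by
  rw [← intervalIntegrable_iff_integrableOn_Ioc_of_le huv]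
  have h := (intervalIntegral.intervalIntegrable_rpow' (a := (0:ℝ)) (b := v - u)
    hc).comp_sub_right u
  simpa using h

lemma rint_sub_left {c u v : ℝ} (hc : -1 < c) (huv : u ≤ v) :
    ∫ t in Set.Ioc u v, (v - t) ^ c = (v - u) ^ (c + 1) / (c + 1) := by
  rw [← intervalIntegral.integral_of_le huv,
    intervalIntegral.integral_comp_sub_left (fun x => x ^ c) v, sub_self,
    integral_rpow (Or.inl hc), Real.zero_rpow (by linarith)]
  ring

lemma rint_sub_right {c u v : ℝ} (hc : -1 < c) (huv : u ≤ v) :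
    ∫ t in Set.Ioc u v, (t - u) ^ c = (v - u) ^ (c + 1) / (c + 1) := by
  rw [← intervalIntegral.integral_of_le huv,
    intervalIntegral.integral_comp_sub_right (fun x => x ^ c) u, sub_self,
    integral_rpow (Or.inl hc), Real.zero_rpow (by linarith)]
  ring

lemma lint_left_le {c u v T : ℝ} (hc : -1 < c) (huv : u ≤ v) (hT : v - u ≤ T) :
    ∫⁻ t in Set.Ioc u v, ENNReal.ofReal ((v - t) ^ c) ≤
      ENNReal.ofReal (T ^ (c + 1) / (c + 1)) := by
  rw [← ofReal_integral_eq_lintegral_ofReal (intOn_sub_left hc huv)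
      ((ae_restrict_iff' measurableSet_Ioc).2 (ae_of_all _ fun t ht =>
        Real.rpow_nonneg (by linarith [ht.2]) _))]
  rw [rint_sub_left hc huv]
  apply ENNReal.ofReal_le_ofReal
  have h1 : (0:ℝ) < c + 1 := by linarith
  gcongr <;> linarith [sub_nonneg.2 huv]

lemma lint_right_le {c u v T : ℝ} (hc : -1 < c) (huv : u ≤ v) (hT : v - u ≤ T) :
    ∫⁻ t in Set.Ioc u v, ENNReal.ofReal ((t - u) ^ c) ≤
      ENNReal.ofReal (T ^ (c + 1) / (c + 1)) := by
  rw [← ofReal_integral_eq_lintegral_ofReal (intOn_sub_right hc huv)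
      ((ae_restrict_iff' measurableSet_Ioc).2 (ae_of_all _ fun t ht =>
        Real.rpow_nonneg (by linarith [ht.1]) _))]
  rw [rint_sub_right hc huv]
  apply ENNReal.ofReal_le_ofReal
  have h1 : (0:ℝ) < c + 1 := by linarith
  gcongr <;> linarith [sub_nonneg.2 huv]

lemma lint_left_Ioo_le {c u v T : ℝ} (hc : -1 < c) (huv : u ≤ v) (hT : v - u ≤ T) :
    ∫⁻ t in Set.Ioo u v, ENNReal.ofReal ((v - t) ^ c) ≤
      ENNReal.ofReal (T ^ (c + 1) / (c + 1)) :=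
  le_trans (lintegral_mono_set Set.Ioo_subset_Ioc_self) (lint_left_le hc huv hT)

-- geometric mean bound
lemma gm_bound {x r s c : ℝ} (h0 : 0 < s) (hs : s < r) (hr : r < x) (hc : c ≤ 0) :
    (x - s) ^ (2 * c) ≤ (x - r) ^ c * (r - s) ^ c := by
  have h1 : 0 < (x - r) * (r - s) := mul_pos (by linarith) (by linarith)
  have h2 : (x - r) * (r - s) ≤ (x - s) ^ (2:ℝ) := by
    rw [show (2:ℝ) = ((2:ℕ):ℝ) by norm_num, Real.rpow_natCast]
    nlinarith
  have h3 : (x - s) ^ (2 * c) = ((x - s) ^ (2:ℝ)) ^ c := Real.rpow_mul (by linarith) 2 c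
  rw [h3, ← Real.mul_rpow (by linarith) (by linarith)]
  exact Real.rpow_le_rpow_of_nonpos h1 h2 hc

lemma endgame {T α β : ℝ} (hT : 0 < T) (hα : -1 < α) (hβ : -1 < β) :
    (∫⁻ x₁ in Set.Ioc (0:ℝ) T, ∫⁻ x₂ in Set.Ioc (0:ℝ) T,
      ∫⁻ r in Set.Ioo (0:ℝ) (min x₁ x₂), ENNReal.ofReal ((x₁ - r) ^ α * (x₂ - r) ^ β)) < ⊤ := by
  set Cα := ENNReal.ofReal (T ^ (α+1) / (α+1)) with hCα
  set Cβ := ENNReal.ofReal (T ^ (β+1) / (β+1)) with hCβ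
  have key : ∀ x₁ ∈ Set.Ioc (0:ℝ) T,
      (∫⁻ x₂ in Set.Ioc (0:ℝ) T, ∫⁻ r in Set.Ioo (0:ℝ) (min x₁ x₂),
        ENNReal.ofReal ((x₁ - r) ^ α * (x₂ - r) ^ β)) ≤ Cβ * Cα := by
    intro x₁ hx₁
    obtain ⟨hx₁0, hx₁T⟩ := hx₁
    set g : ℝ × ℝ → ENNReal := fun p =>
      ({p : ℝ × ℝ | 0 < p.2 ∧ p.2 < x₁ ∧ p.2 < p.1}).indicator
        (fun p => ENNReal.ofReal ((x₁ - p.2) ^ α * (p.1 - p.2) ^ β)) p with hg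
    have hgmeas : Measurable g := by
      apply Measurable.indicator
      · exact (((measurable_const.sub measurable_snd).pow_const α).mul
          ((measurable_fst.sub measurable_snd).pow_const β)).ennreal_ofReal
      · have : IsOpen {p : ℝ × ℝ | 0 < p.2 ∧ p.2 < x₁ ∧ p.2 < p.1} := by
          exact ((isOpen_lt continuous_const continuous_snd).inter
            ((isOpen_lt continuous_snd continuous_const).inter
              (isOpen_lt continuous_snd continuous_fst)))
        exact this.measurableSet
    have step1 : ∀ x₂ : ℝ, (∫⁻ r in Set.Ioo (0:ℝ) (min x₁ x₂),
        ENNReal.ofReal ((x₁ - r) ^ α * (x₂ - r) ^ β)) = ∫⁻ r, g (x₂, r) := by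
      intro x₂
      rw [← lintegral_indicator measurableSet_Ioo]
      congr 1
      ext r
      simp [hg, Set.indicator_apply, Set.mem_Ioo, Set.mem_setOf_eq, lt_min_iff, and_assoc]
    simp_rw [step1]
    rw [lintegral_lintegral_swap hgmeas.aemeasurable]
    have step3 : ∀ r : ℝ, (∫⁻ x₂ in Set.Ioc (0:ℝ) T, g (x₂, r)) ≤
        (Set.Ioo (0:ℝ) x₁).indicator (fun r => Cβ * ENNReal.ofReal ((x₁ - r) ^ α)) r := by
      intro r
      by_cases hr : 0 < r ∧ r < x₁
      · have hb : ∀ x₂ : ℝ, g (x₂, r) ≤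
            (Set.Ioi r).indicator (fun x₂ => ENNReal.ofReal ((x₂ - r) ^ β)) x₂ *
              ENNReal.ofReal ((x₁ - r) ^ α) := by
          intro x₂
          simp only [hg, Set.indicator_apply, Set.mem_setOf_eq, Set.mem_Ioi]
          by_cases h : r < x₂
          · simp only [h, if_true, hr.1, hr.2, and_true, true_and, if_true]
            rw [← ENNReal.ofReal_mul (Real.rpow_nonneg (by linarith [hr.2]) _)]
            rw [mul_comm ((x₁ - r) ^ α)]
          · simp [h, hr.1, hr.2]
        calc (∫⁻ x₂ in Set.Ioc (0:ℝ) T, g (x₂, r)) ≤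
            ∫⁻ x₂ in Set.Ioc (0:ℝ) T,
              (Set.Ioi r).indicator (fun x₂ => ENNReal.ofReal ((x₂ - r) ^ β)) x₂ *
                ENNReal.ofReal ((x₁ - r) ^ α) := lintegral_mono fun x₂ => hb x₂
          _ = (∫⁻ x₂ in Set.Ioc (0:ℝ) T,
              (Set.Ioi r).indicator (fun x₂ => ENNReal.ofReal ((x₂ - r) ^ β)) x₂) *
                ENNReal.ofReal ((x₁ - r) ^ α) := by
              rw [lintegral_mul_const' _ _ ENNReal.ofReal_ne_top]
          _ ≤ Cβ * ENNReal.ofReal ((x₁ - r) ^ α) := by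
              apply mul_le_mul_left
              rw [lintegral_indicator measurableSet_Ioi, Measure.restrict_restrict measurableSet_Ioi]
              have hset : Set.Ioi r ∩ Set.Ioc (0:ℝ) T = Set.Ioc r T := by
                ext y
                simp only [Set.mem_inter_iff, Set.mem_Ioi, Set.mem_Ioc]
                constructor
                · rintro ⟨h1, _, h3⟩; exact ⟨h1, h3⟩
                · rintro ⟨h1, h2⟩; exact ⟨h1, lt_trans hr.1 h1, h2⟩
              rw [hset]
              exact lint_right_le hβ (by linarith [hr.2]) (by linarith [hr.1])
          _ = (Set.Ioo (0:ℝ) x₁).indicator (fun r => Cβ * ENNReal.ofReal ((x₁ - r) ^ α)) r := by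
              rw [Set.indicator_of_mem (Set.mem_Ioo.2 hr)]
      · have hz : ∀ x₂ : ℝ, g (x₂, r) = 0 := by
          intro x₂
          simp only [hg, Set.indicator_apply, Set.mem_setOf_eq]
          rw [if_neg]
          rintro ⟨h1, h2, -⟩
          exact hr ⟨h1, h2⟩
        simp [hz]
    calc (∫⁻ r, ∫⁻ x₂ in Set.Ioc (0:ℝ) T, g (x₂, r)) ≤
        ∫⁻ r, (Set.Ioo (0:ℝ) x₁).indicator (fun r => Cβ * ENNReal.ofReal ((x₁ - r) ^ α)) r :=
          lintegral_mono step3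
      _ = Cβ * ∫⁻ r in Set.Ioo (0:ℝ) x₁, ENNReal.ofReal ((x₁ - r) ^ α) := by
          rw [lintegral_indicator measurableSet_Ioo,
            lintegral_const_mul' _ _ ENNReal.ofReal_ne_top]
      _ ≤ Cβ * Cα := by
          apply mul_le_mul_right
          exact lint_left_Ioo_le hα (le_of_lt hx₁0) (by linarith)
  calc (∫⁻ x₁ in Set.Ioc (0:ℝ) T, ∫⁻ x₂ in Set.Ioc (0:ℝ) T,
      ∫⁻ r in Set.Ioo (0:ℝ) (min x₁ x₂), ENNReal.ofReal ((x₁ - r) ^ α * (x₂ - r) ^ β)) ≤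
      ∫⁻ _ in Set.Ioc (0:ℝ) T, Cβ * Cα :=
        lintegral_mono_ae ((ae_restrict_iff' measurableSet_Ioc).2 (ae_of_all _ key))
    _ = Cβ * Cα * volume (Set.Ioc (0:ℝ) T) := setLIntegral_const _ _
    _ < ⊤ := by
        rw [Real.volume_Ioc]
        exact ENNReal.mul_lt_top (ENNReal.mul_lt_top ENNReal.ofReal_lt_top ENNReal.ofReal_lt_top)
          ENNReal.ofReal_lt_top

lemma inner1 {T a b x₁ x₂ r : ℝ} (ha1 : -1 < a) (ha0 : a ≤ 0) (hb2 : -2 < b) (hb0 : b ≤ 0)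
    (hr0 : 0 < r) (hr1 : r < x₁) (hr2 : r < x₂) (hx₂T : x₂ ≤ T) :
    (∫⁻ s in Set.Ioc (0:ℝ) r, ENNReal.ofReal ((x₁ - s) ^ a * (x₂ - s) ^ b)) ≤
      ENNReal.ofReal (T ^ (b/2 + 1) / (b/2 + 1)) *
        ENNReal.ofReal ((x₁ - r) ^ a * (x₂ - r) ^ (b/2)) := by
  rw [← restrict_Ioo_eq_restrict_Ioc]
  have hbd : ∀ s ∈ Set.Ioo (0:ℝ) r,
      ENNReal.ofReal ((x₁ - s) ^ a * (x₂ - s) ^ b) ≤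
        ENNReal.ofReal ((x₁ - r) ^ a * (x₂ - r) ^ (b/2)) *
          ENNReal.ofReal ((r - s) ^ (b/2)) := by
    intro s hs
    obtain ⟨hs0, hsr⟩ := hs
    rw [← ENNReal.ofReal_mul (mul_nonneg (Real.rpow_nonneg (by linarith) _)
      (Real.rpow_nonneg (by linarith) _))]
    apply ENNReal.ofReal_le_ofReal
    have p1 : (x₁ - s) ^ a ≤ (x₁ - r) ^ a :=
      Real.rpow_le_rpow_of_nonpos (by linarith) (by linarith) ha0
    have p2 : (x₂ - s) ^ b ≤ (x₂ - r) ^ (b/2) * (r - s) ^ (b/2) := by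
      have := gm_bound (x := x₂) (r := r) (s := s) hs0 hsr hr2 (by linarith : b/2 ≤ 0)
      rwa [show 2 * (b/2) = b by ring] at this
    calc (x₁ - s) ^ a * (x₂ - s) ^ b ≤ (x₁ - r) ^ a * ((x₂ - r) ^ (b/2) * (r - s) ^ (b/2)) := by
          apply mul_le_mul p1 p2 (Real.rpow_nonneg (by linarith) _)
            (Real.rpow_nonneg (by linarith) _)
      _ = (x₁ - r) ^ a * (x₂ - r) ^ (b/2) * (r - s) ^ (b/2) := by ring
  calc (∫⁻ s in Set.Ioo (0:ℝ) r, ENNReal.ofReal ((x₁ - s) ^ a * (x₂ - s) ^ b)) ≤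
      ∫⁻ s in Set.Ioo (0:ℝ) r, ENNReal.ofReal ((x₁ - r) ^ a * (x₂ - r) ^ (b/2)) *
        ENNReal.ofReal ((r - s) ^ (b/2)) :=
        lintegral_mono_ae ((ae_restrict_iff' measurableSet_Ioo).2 (ae_of_all _ hbd))
    _ = ENNReal.ofReal ((x₁ - r) ^ a * (x₂ - r) ^ (b/2)) *
        ∫⁻ s in Set.Ioo (0:ℝ) r, ENNReal.ofReal ((r - s) ^ (b/2)) :=
        lintegral_const_mul' _ _ ENNReal.ofReal_ne_top
    _ ≤ ENNReal.ofReal ((x₁ - r) ^ a * (x₂ - r) ^ (b/2)) *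
        ENNReal.ofReal (T ^ (b/2 + 1) / (b/2 + 1)) := by
        apply mul_le_mul_right
        exact lint_left_Ioo_le (by linarith) (le_of_lt hr0) (by linarith)
    _ = ENNReal.ofReal (T ^ (b/2 + 1) / (b/2 + 1)) *
        ENNReal.ofReal ((x₁ - r) ^ a * (x₂ - r) ^ (b/2)) := mul_comm _ _

lemma inner2 {T H q x₁ x₂ r : ℝ} (hH : 1/2 < H) (hH1 : H < 1) (hq0 : 0 < q)
    (hr0 : 0 < r) (hr1 : r < x₁) (hr2 : r < x₂) (hx₂T : x₂ ≤ T) :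
    ENNReal.ofReal ((∫ s in (0:ℝ)..r, (x₁-s) ^ (2*(H-1)) * (x₂-s) ^ (2*(H-3/2))) ^ (q/2)) ≤
      ENNReal.ofReal ((T ^ (H-1/2) / (H-1/2)) ^ (q/2)) *
        ENNReal.ofReal ((x₁-r) ^ (q*(H-1)) * (x₂-r) ^ (q*(H-3/2)/2)) := by
  have hx₁r : (0:ℝ) < x₁ - r := by linarith
  have hx₂r : (0:ℝ) < x₂ - r := by linarith
  have hH2 : (0:ℝ) < H - 1/2 := by linarith
  set G := ∫ s in (0:ℝ)..r, (x₁-s) ^ (2*(H-1)) * (x₂-s) ^ (2*(H-3/2)) with hGdef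
  have hGnn : 0 ≤ G := by
    apply intervalIntegral.integral_nonneg (le_of_lt hr0)
    intro u hu
    exact mul_nonneg (Real.rpow_nonneg (by linarith [hu.2]) _)
      (Real.rpow_nonneg (by linarith [hu.2]) _)
  have hGle : G ≤ (x₁-r) ^ (2*(H-1)) * (x₂-r) ^ (H-3/2) * (r ^ (H-1/2) / (H-1/2)) := by
    have h1 : G = ∫ s in Set.Ioo (0:ℝ) r, (x₁-s) ^ (2*(H-1)) * (x₂-s) ^ (2*(H-3/2)) := by
      rw [hGdef, intervalIntegral.integral_of_le (le_of_lt hr0),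
        MeasureTheory.integral_Ioc_eq_integral_Ioo]
    have hgint : IntegrableOn
        (fun s => ((x₁-r) ^ (2*(H-1)) * (x₂-r) ^ (H-3/2)) * (r - s) ^ (H-3/2))
        (Set.Ioo (0:ℝ) r) :=
      (((intOn_sub_left (by linarith : (-1:ℝ) < H-3/2) (le_of_lt hr0)).mono_set
        Set.Ioo_subset_Ioc_self)).const_mul _
    have hmono : G ≤ ∫ s in Set.Ioo (0:ℝ) r,
        ((x₁-r) ^ (2*(H-1)) * (x₂-r) ^ (H-3/2)) * (r - s) ^ (H-3/2) := by
      rw [h1]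
      apply integral_mono_of_nonneg
      · exact (ae_restrict_iff' measurableSet_Ioo).2 (ae_of_all _ fun s hs =>
          mul_nonneg (Real.rpow_nonneg (by linarith [hs.2]) _)
            (Real.rpow_nonneg (by linarith [hs.2]) _))
      · exact hgint
      · apply (ae_restrict_iff' measurableSet_Ioo).2 (ae_of_all _ ?_)
        intro s hs
        obtain ⟨hs0, hsr⟩ := hs
        have p1 : (x₁ - s) ^ (2*(H-1)) ≤ (x₁ - r) ^ (2*(H-1)) :=
          Real.rpow_le_rpow_of_nonpos (by linarith) (by linarith) (by linarith)
        have p2 : (x₂ - s) ^ (2*(H-3/2)) ≤ (x₂ - r) ^ (H-3/2) * (r - s) ^ (H-3/2) := by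
          have := gm_bound (x := x₂) (r := r) (s := s) hs0 hsr hr2
            (by linarith : H - 3/2 ≤ 0)
          exact this
        calc (x₁-s) ^ (2*(H-1)) * (x₂-s) ^ (2*(H-3/2)) ≤
            (x₁-r) ^ (2*(H-1)) * ((x₂-r) ^ (H-3/2) * (r-s) ^ (H-3/2)) :=
              mul_le_mul p1 p2 (Real.rpow_nonneg (by linarith) _)
                (Real.rpow_nonneg (by linarith) _)
          _ = ((x₁-r) ^ (2*(H-1)) * (x₂-r) ^ (H-3/2)) * (r-s) ^ (H-3/2) := by ring
    calc G ≤ ∫ s in Set.Ioo (0:ℝ) r,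
          ((x₁-r) ^ (2*(H-1)) * (x₂-r) ^ (H-3/2)) * (r - s) ^ (H-3/2) := hmono
      _ = ((x₁-r) ^ (2*(H-1)) * (x₂-r) ^ (H-3/2)) *
          ∫ s in Set.Ioo (0:ℝ) r, (r - s) ^ (H-3/2) := by
          rw [MeasureTheory.integral_const_mul]
      _ = ((x₁-r) ^ (2*(H-1)) * (x₂-r) ^ (H-3/2)) * (r ^ (H-1/2) / (H-1/2)) := by
          rw [← MeasureTheory.integral_Ioc_eq_integral_Ioo,
            rint_sub_left (by linarith : (-1:ℝ) < H-3/2) (le_of_lt hr0), sub_zero,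
            show H - 3/2 + 1 = H - 1/2 by ring]
  have hstep : G ^ (q/2) ≤
      ((x₁-r) ^ (2*(H-1)) * (x₂-r) ^ (H-3/2) * (r ^ (H-1/2) / (H-1/2))) ^ (q/2) :=
    Real.rpow_le_rpow hGnn hGle (by positivity)
  have hexpand : ((x₁-r) ^ (2*(H-1)) * (x₂-r) ^ (H-3/2) * (r ^ (H-1/2) / (H-1/2))) ^ (q/2) =
      ((x₁-r) ^ (q*(H-1)) * (x₂-r) ^ (q*(H-3/2)/2)) * (r ^ (H-1/2) / (H-1/2)) ^ (q/2) := by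
    rw [Real.mul_rpow (mul_nonneg (Real.rpow_nonneg hx₁r.le _) (Real.rpow_nonneg hx₂r.le _))
        (by positivity),
      Real.mul_rpow (Real.rpow_nonneg hx₁r.le _) (Real.rpow_nonneg hx₂r.le _),
      ← Real.rpow_mul hx₁r.le, ← Real.rpow_mul hx₂r.le,
      show 2*(H-1)*(q/2) = q*(H-1) by ring, show (H-3/2)*(q/2) = q*(H-3/2)/2 by ring]
  have hT0 : (0:ℝ) < T := by linarith
  have hconst : (r ^ (H-1/2) / (H-1/2)) ^ (q/2) ≤ (T ^ (H-1/2) / (H-1/2)) ^ (q/2) := by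
    apply Real.rpow_le_rpow (div_nonneg (Real.rpow_nonneg hr0.le _) hH2.le) ?_ (by positivity)
    exact (div_le_div_iff_of_pos_right hH2).2 (Real.rpow_le_rpow hr0.le (by linarith) hH2.le)
  calc ENNReal.ofReal (G ^ (q/2)) ≤
      ENNReal.ofReal (((x₁-r) ^ (q*(H-1)) * (x₂-r) ^ (q*(H-3/2)/2)) *
        (T ^ (H-1/2) / (H-1/2)) ^ (q/2)) := by
        apply ENNReal.ofReal_le_ofReal
        calc G ^ (q/2) ≤ ((x₁-r) ^ (q*(H-1)) * (x₂-r) ^ (q*(H-3/2)/2)) *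
            (r ^ (H-1/2) / (H-1/2)) ^ (q/2) := by rw [← hexpand]; exact hstep
          _ ≤ _ := by
              apply mul_le_mul_of_nonneg_left hconst
              exact mul_nonneg (Real.rpow_nonneg hx₁r.le _) (Real.rpow_nonneg hx₂r.le _)
    _ = ENNReal.ofReal ((T ^ (H-1/2) / (H-1/2)) ^ (q/2)) *
        ENNReal.ofReal ((x₁-r) ^ (q*(H-1)) * (x₂-r) ^ (q*(H-3/2)/2)) := by
        rw [mul_comm, ENNReal.ofReal_mul
          (Real.rpow_nonneg (div_nonneg (Real.rpow_nonneg hT0.le _) hH2.le) _)]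

theorem stmt10 (H T q : ℝ) (hH : 1/2 < H) (hH1 : H < 1) (hT : 0 < T)
    (hq1 : 1 ≤ q) (hq2 : q < 2/(3/2 - H)) :
    (2 ≤ q →
      (∫⁻ x₁ in Set.Ioc (0:ℝ) T, ∫⁻ x₂ in Set.Ioc (0:ℝ) T,
        ∫⁻ r in Set.Ioc (0:ℝ) (min x₁ x₂), ∫⁻ s in Set.Ioc (0:ℝ) r,
          ENNReal.ofReal ((x₁-s) ^ (q*(H-1)) * (x₂-s) ^ (q*(H-3/2)))) < ⊤) ∧
    (q ≤ 2 →
      (∫⁻ x₁ in Set.Ioc (0:ℝ) T, ∫⁻ x₂ in Set.Ioc (0:ℝ) T,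
        ∫⁻ r in Set.Ioc (0:ℝ) (min x₁ x₂),
          ENNReal.ofReal
            ((∫ s in (0:ℝ)..r, (x₁-s) ^ (2*(H-1)) * (x₂-s) ^ (2*(H-3/2))) ^ (q/2))) < ⊤) := by
  have hlam : (0:ℝ) < 3/2 - H := by linarith
  have hq0 : (0:ℝ) < q := by linarith
  have hbq : q * (3/2 - H) < 2 := (lt_div_iff₀ hlam).1 hq2
  have haq : q * (1 - H) < 1 := by
    have h1 : q * (1 - H) < (2/(3/2-H)) * (1-H) :=
      mul_lt_mul_of_pos_right hq2 (by linarith)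
    have h2 : (2/(3/2-H)) * (1-H) < 1 := by
      rw [div_mul_eq_mul_div, div_lt_one hlam]; linarith
    linarith
  have hα : -1 < q * (H - 1) := by nlinarith
  have hα0 : q * (H - 1) ≤ 0 := by nlinarith
  have hb2 : -2 < q * (H - 3/2) := by nlinarith
  have hb0 : q * (H - 3/2) ≤ 0 := by nlinarith
  have hβ : -1 < q * (H - 3/2) / 2 := by linarith
  constructor
  · intro _
    apply lt_of_le_of_lt ?_ (ENNReal.mul_lt_top
      (ENNReal.ofReal_lt_top (r := T ^ (q*(H-3/2)/2 + 1) / (q*(H-3/2)/2 + 1)))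
      (endgame (α := q*(H-1)) (β := q*(H-3/2)/2) hT hα hβ))
    calc (∫⁻ x₁ in Set.Ioc (0:ℝ) T, ∫⁻ x₂ in Set.Ioc (0:ℝ) T,
        ∫⁻ r in Set.Ioc (0:ℝ) (min x₁ x₂), ∫⁻ s in Set.Ioc (0:ℝ) r,
          ENNReal.ofReal ((x₁-s) ^ (q*(H-1)) * (x₂-s) ^ (q*(H-3/2)))) ≤
        ∫⁻ x₁ in Set.Ioc (0:ℝ) T, ENNReal.ofReal (T ^ (q*(H-3/2)/2 + 1) / (q*(H-3/2)/2 + 1)) *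
          ∫⁻ x₂ in Set.Ioc (0:ℝ) T, ∫⁻ r in Set.Ioo (0:ℝ) (min x₁ x₂),
            ENNReal.ofReal ((x₁-r) ^ (q*(H-1)) * (x₂-r) ^ (q*(H-3/2)/2)) := by
          apply lintegral_mono_ae ((ae_restrict_iff' measurableSet_Ioc).2 (ae_of_all _ ?_))
          intro x₁ hx₁
          rw [← lintegral_const_mul' _ _ ENNReal.ofReal_ne_top]
          apply lintegral_mono_ae ((ae_restrict_iff' measurableSet_Ioc).2 (ae_of_all _ ?_))
          intro x₂ hx₂
          rw [← restrict_Ioo_eq_restrict_Ioc, ← lintegral_const_mul' _ _ ENNReal.ofReal_ne_top]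
          apply lintegral_mono_ae ((ae_restrict_iff' measurableSet_Ioo).2 (ae_of_all _ ?_))
          intro r hr
          obtain ⟨hr0, hrm⟩ := hr
          rw [lt_min_iff] at hrm
          exact inner1 hα hα0 hb2 hb0 hr0 hrm.1 hrm.2 hx₂.2
      _ = ENNReal.ofReal (T ^ (q*(H-3/2)/2 + 1) / (q*(H-3/2)/2 + 1)) *
          ∫⁻ x₁ in Set.Ioc (0:ℝ) T, ∫⁻ x₂ in Set.Ioc (0:ℝ) T,
            ∫⁻ r in Set.Ioo (0:ℝ) (min x₁ x₂),
              ENNReal.ofReal ((x₁-r) ^ (q*(H-1)) * (x₂-r) ^ (q*(H-3/2)/2)) :=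
        lintegral_const_mul' _ _ ENNReal.ofReal_ne_top
  · intro _
    apply lt_of_le_of_lt ?_ (ENNReal.mul_lt_top
      (ENNReal.ofReal_lt_top (r := (T ^ (H-1/2) / (H-1/2)) ^ (q/2)))
      (endgame (α := q*(H-1)) (β := q*(H-3/2)/2) hT hα hβ))
    calc (∫⁻ x₁ in Set.Ioc (0:ℝ) T, ∫⁻ x₂ in Set.Ioc (0:ℝ) T,
        ∫⁻ r in Set.Ioc (0:ℝ) (min x₁ x₂),
          ENNReal.ofReal
            ((∫ s in (0:ℝ)..r, (x₁-s) ^ (2*(H-1)) * (x₂-s) ^ (2*(H-3/2))) ^ (q/2))) ≤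
        ∫⁻ x₁ in Set.Ioc (0:ℝ) T, ENNReal.ofReal ((T ^ (H-1/2) / (H-1/2)) ^ (q/2)) *
          ∫⁻ x₂ in Set.Ioc (0:ℝ) T, ∫⁻ r in Set.Ioo (0:ℝ) (min x₁ x₂),
            ENNReal.ofReal ((x₁-r) ^ (q*(H-1)) * (x₂-r) ^ (q*(H-3/2)/2)) := by
          apply lintegral_mono_ae ((ae_restrict_iff' measurableSet_Ioc).2 (ae_of_all _ ?_))
          intro x₁ hx₁
          rw [← lintegral_const_mul' _ _ ENNReal.ofReal_ne_top]
          apply lintegral_mono_ae ((ae_restrict_iff' measurableSet_Ioc).2 (ae_of_all _ ?_))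
          intro x₂ hx₂
          rw [← restrict_Ioo_eq_restrict_Ioc, ← lintegral_const_mul' _ _ ENNReal.ofReal_ne_top]
          apply lintegral_mono_ae ((ae_restrict_iff' measurableSet_Ioo).2 (ae_of_all _ ?_))
          intro r hr
          obtain ⟨hr0, hrm⟩ := hr
          rw [lt_min_iff] at hrm
          exact inner2 hH hH1 hq0 hr0 hrm.1 hrm.2 hx₂.2
      _ = ENNReal.ofReal ((T ^ (H-1/2) / (H-1/2)) ^ (q/2)) *
          ∫⁻ x₁ in Set.Ioc (0:ℝ) T, ∫⁻ x₂ in Set.Ioc (0:ℝ) T,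
            ∫⁻ r in Set.Ioo (0:ℝ) (min x₁ x₂),
              ENNReal.ofReal ((x₁-r) ^ (q*(H-1)) * (x₂-r) ^ (q*(H-3/2)/2)) :=
        lintegral_const_mul' _ _ ENNReal.ofReal_ne_top
end

section
/- Let 1/2 < H < 1 and 1 ≤ q < 1/(1−H). With D^ε_{r,t}B = (1/ε)∫₀^r Δ_ε K(t,u)dW_u and D_{r,t}B = ∫₀^r (∂K/∂t)(t,u)dW_u (the Nelson derivative of Riemann–Liouville fBm), one has lim_{ε↓0} ∫₀^T ∫_r^T E|D^ε_{r,t}B − D_{r,t}B|^q dt dr = 0. -/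
open MeasureTheory Real Filter Set
open scoped NNReal

/-- `Δ_ε K(t,u) = (K(t+ε,u) - K(t,u)) 1_{(0,t)}(u)`. -/
noncomputable def DeltaK (H ε t u : ℝ) : ℝ :=
  if 0 < u ∧ u < t then K H (t+ε) u - K H t u else 0

/-- `∂K/∂t(t,u) = √(2H)(H-1/2)(t-u)^{H-3/2}`. -/
noncomputable def dK (H t u : ℝ) : ℝ := Real.sqrt (2*H) * (H - 1/2) * (t-u) ^ (H - 3/2)

namespace RLaux

/-- real rpow with constant exponent is measurable -/
lemma measurable_rpow_const (p : ℝ) : Measurable fun x : ℝ => x ^ p := by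
  classical
  have h : ∀ x : ℝ, x ^ p =
      if x = 0 then (if p = 0 then 1 else 0)
      else Real.exp (Real.log x * p) * (if x < 0 then Real.cos (p * π) else 1) := by
    intro x
    rcases lt_trichotomy x 0 with hx | hx | hx
    · rw [Real.rpow_def_of_neg hx, if_neg hx.ne, if_pos hx, mul_comm p π]
    · subst hx
      rcases eq_or_ne p 0 with hp | hp
      · simp [hp]
      · simp [Real.zero_rpow hp, hp]
    · rw [Real.rpow_def_of_pos hx, if_neg hx.ne', if_neg (not_lt.2 hx.le), mul_one]
  simp_rw [h]
  refine Measurable.ite (by simpa using (measurableSet_singleton (0:ℝ))) measurable_const ?_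
  exact ((Real.measurable_log.mul_const p).exp).mul
    (Measurable.ite measurableSet_Iio measurable_const measurable_const)

variable {H q ε r t u T : ℝ}

lemma hasDeriv_kernel (hH : 1/2 < H) (hut : u < t) :
    HasDerivAt (fun s => Real.sqrt (2*H) * (s - u) ^ (H - 1/2)) (dK H t u) t := by
  have h1 : HasDerivAt (fun s : ℝ => s - u) 1 t := (hasDerivAt_id t).sub_const u
  have h2 : HasDerivAt (fun y : ℝ => y ^ (H - 1/2)) ((H - 1/2) * (t - u) ^ (H - 1/2 - 1)) (t - u) :=
    Real.hasDerivAt_rpow_const (Or.inl (by linarith))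
  have h3 : HasDerivAt (fun s => Real.sqrt (2*H) * (s - u) ^ (H - 1/2))
      (Real.sqrt (2*H) * ((H - 1/2) * (t - u) ^ (H - 1/2 - 1) * 1)) t :=
    (h2.comp t h1).const_mul (Real.sqrt (2*H))
  have he : H - 1/2 - 1 = H - 3/2 := by ring
  convert h3 using 1
  rw [dK, he]
  ring

lemma DeltaK_eq (hε : 0 < ε) (hu : 0 < u) (hut : u < t) :
    DeltaK H ε t u
      = Real.sqrt (2*H) * (t + ε - u) ^ (H - 1/2) - Real.sqrt (2*H) * (t - u) ^ (H - 1/2) := by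
  rw [DeltaK, if_pos ⟨hu, hut⟩, K, K, if_pos ⟨hu, by linarith⟩, if_pos ⟨hu, hut⟩]

lemma dK_nonneg (hH : 1/2 < H) (hut : u < t) : 0 ≤ dK H t u := by
  have h1 : (0:ℝ) ≤ Real.sqrt (2*H) := Real.sqrt_nonneg _
  have h2 : (0:ℝ) ≤ (t - u) ^ (H - 3/2) := Real.rpow_nonneg (by linarith) _
  have h3 : (0:ℝ) ≤ H - 1/2 := by linarith
  exact mul_nonneg (mul_nonneg h1 h3) h2

lemma dK_mono (hH : 1/2 < H) (hH1 : H < 1) (hut : u < t) {t' : ℝ} (h : t ≤ t') : dK H t' u ≤ dK H t u := by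
  have h1 : (t - u) ^ (H - 3/2) ≥ (t' - u) ^ (H - 3/2) :=
    Real.rpow_le_rpow_of_nonpos (by linarith) (by linarith) (by linarith)
  have h2 : (0:ℝ) ≤ Real.sqrt (2*H) * (H - 1/2) :=
    mul_nonneg (Real.sqrt_nonneg _) (by linarith)
  exact mul_le_mul_of_nonneg_left h1 h2

lemma slope_mem (hH : 1/2 < H) (hH1 : H < 1) (hε : 0 < ε) (hu : 0 < u) (hut : u < t) :
    0 ≤ DeltaK H ε t u / ε ∧ DeltaK H ε t u / ε ≤ dK H t u := by
  set f : ℝ → ℝ := fun s => Real.sqrt (2*H) * (s - u) ^ (H - 1/2) with hf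
  have hcont : ContinuousOn f (Icc t (t+ε)) := fun s hs =>
    (hasDeriv_kernel hH (lt_of_lt_of_le hut hs.1)).continuousAt.continuousWithinAt
  have hderiv : ∀ s ∈ Ioo t (t+ε), HasDerivAt f (dK H s u) s := fun s hs =>
    hasDeriv_kernel hH (hut.trans hs.1)
  obtain ⟨c, hc, hceq⟩ :=
    exists_hasDerivAt_eq_slope f (fun s => dK H s u) (by linarith) hcont hderiv
  have hslope : DeltaK H ε t u / ε = dK H c u := by
    rw [DeltaK_eq hε hu hut, hceq]
    have : t + ε - t = ε := by ring
    rw [this]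
  constructor
  · rw [hslope]; exact dK_nonneg hH (hut.trans hc.1)
  · rw [hslope]; exact dK_mono hH hH1 hut hc.1.le

lemma dK_sq (hH : 1/2 < H) (hut : u < t) :
    (dK H t u)^2 = 2*H*(H - 1/2)^2 * (t - u) ^ (2*H - 3) := by
  have h0 : (0:ℝ) ≤ t - u := by linarith
  have h2H : (0:ℝ) ≤ 2*H := by linarith
  have hsq : ((t - u) ^ (H - 3/2))^2 = (t - u) ^ (2*H - 3) := by
    rw [← Real.rpow_natCast ((t - u) ^ (H - 3/2)) 2, ← Real.rpow_mul h0]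
    congr 1
    push_cast; ring
  rw [dK, mul_pow, mul_pow, Real.sq_sqrt h2H, hsq]

lemma sq_diff_le (hH : 1/2 < H) (hH1 : H < 1) (hε : 0 < ε) (hu : 0 < u) (hut : u < t) :
    (DeltaK H ε t u / ε - dK H t u)^2 ≤ 2*H*(H - 1/2)^2 * (t - u) ^ (2*H - 3) := by
  obtain ⟨h1, h2⟩ := slope_mem hH hH1 hε hu hut
  have h3 : (DeltaK H ε t u / ε - dK H t u)^2 ≤ (dK H t u)^2 := by
    apply sq_le_sq'
    · have := dK_nonneg hH hut; linarith
    · linarith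
  calc (DeltaK H ε t u / ε - dK H t u)^2 ≤ (dK H t u)^2 := h3
    _ = 2*H*(H - 1/2)^2 * (t - u) ^ (2*H - 3) := dK_sq hH hut

/-- joint measurability of the squared integrand, argument `(t,u)` -/
lemma meas_sq (H ε : ℝ) :
    Measurable (fun p : ℝ × ℝ => (DeltaK H ε p.1 p.2 / ε - dK H p.1 p.2)^2) := by
  have hset : MeasurableSet {p : ℝ × ℝ | 0 < p.2 ∧ p.2 < p.1} :=
    (measurableSet_lt measurable_const measurable_snd).inter
      (measurableSet_lt measurable_snd measurable_fst)
  have hK : Measurable fun p : ℝ × ℝ => K H p.1 p.2 := by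
    unfold K
    exact Measurable.ite hset
      (((measurable_rpow_const _).comp (measurable_fst.sub measurable_snd)).const_mul _)
      measurable_const
  have hDelta : Measurable fun p : ℝ × ℝ => DeltaK H ε p.1 p.2 := by
    unfold DeltaK
    exact Measurable.ite hset
      ((hK.comp ((measurable_fst.add_const ε).prodMk measurable_snd)).sub hK)
      measurable_const
  have hdK : Measurable fun p : ℝ × ℝ => dK H p.1 p.2 := by
    unfold dK
    exact ((measurable_rpow_const _).comp (measurable_fst.sub measurable_snd)).const_mul _
  exact ((hDelta.div_const ε).sub hdK).pow_const 2

/-- abbreviation for the variance integral -/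
noncomputable def vfun (H ε r t : ℝ) : ℝ :=
  ∫ u in (0:ℝ)..r, (DeltaK H ε t u / ε - dK H t u)^2

/-- globally defined measurable version of `vfun`, as function of `(r,t)` -/
noncomputable def w (H ε r t : ℝ) : ℝ :=
  ∫ u, Set.indicator (Set.Ioc (0:ℝ) r) (fun u => (DeltaK H ε t u / ε - dK H t u)^2) u

lemma w_eq_v (hr : 0 ≤ r) : w H ε r t = vfun H ε r t := by
  rw [vfun, intervalIntegral.integral_of_le hr, w, integral_indicator measurableSet_Ioc]

set_option maxHeartbeats 1000000 in
lemma meas_w (H ε : ℝ) : Measurable fun p : ℝ × ℝ => w H ε p.1 p.2 := by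
  have hm : Measurable fun x : (ℝ × ℝ) × ℝ =>
      Set.indicator (Set.Ioc (0:ℝ) x.1.1)
        (fun u => (DeltaK H ε x.1.2 u / ε - dK H x.1.2 u)^2) x.2 := by
    simp_rw [Set.indicator_apply]
    refine Measurable.ite ?_ ?_ measurable_const
    · have : {x : (ℝ × ℝ) × ℝ | x.2 ∈ Set.Ioc (0:ℝ) x.1.1}
          = {x : (ℝ × ℝ) × ℝ | 0 < x.2 ∧ x.2 ≤ x.1.1} := by
        ext x; simp [Set.mem_Ioc]
      rw [this]
      exact (measurableSet_lt measurable_const measurable_snd).inter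
        (measurableSet_le measurable_snd (measurable_fst.comp measurable_fst))
    · exact (meas_sq H ε).comp ((measurable_snd.comp measurable_fst).prodMk measurable_snd)
  exact hm.stronglyMeasurable.integral_prod_right'.measurable

lemma meas_w_t (H ε r : ℝ) : Measurable fun t => w H ε r t :=
  (meas_w H ε).comp (measurable_const.prodMk measurable_id)

lemma v_nonneg (hr : 0 ≤ r) : 0 ≤ vfun H ε r t :=
  intervalIntegral.integral_nonneg hr (fun u _ => sq_nonneg _)

/-- the constant in the variance bound -/
noncomputable def Cst (H : ℝ) : ℝ := 2*H*(H - 1/2)^2 / (2 - 2*H)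

lemma Cst_pos (hH : 1/2 < H) (hH1 : H < 1) : 0 < Cst H := by
  have h1 : (0:ℝ) < 2*H := by linarith
  have h2 : (0:ℝ) < (H - 1/2)^2 := pow_pos (by linarith) 2
  have h3 : (0:ℝ) < 2 - 2*H := by linarith
  exact div_pos (mul_pos h1 h2) h3

lemma g_integrableOn (hH : 1/2 < H) (hr : 0 < r) (hrt : r < t) :
    IntegrableOn (fun u => 2*H*(H - 1/2)^2 * (t - u) ^ (2*H - 3)) (Set.Ioc 0 r) := by
  refine (ContinuousOn.integrableOn_Icc ?_).mono_set Set.Ioc_subset_Icc_self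
  intro u hu
  simp only [Set.mem_Icc] at hu
  have hne : t - u ≠ 0 := ne_of_gt (by linarith [hu.2])
  have h1 : ContinuousAt (fun u : ℝ => (t - u) ^ (2*H - 3)) u :=
    ((continuous_const.sub continuous_id).continuousAt).rpow_const (Or.inl hne)
  exact (continuousAt_const.mul h1).continuousWithinAt

lemma sq_integrableOn (hH : 1/2 < H) (hH1 : H < 1) (hε : 0 < ε) (hr : 0 < r) (hrt : r < t) :
    IntegrableOn (fun u => (DeltaK H ε t u / ε - dK H t u)^2) (Set.Ioc 0 r) := by
  refine (g_integrableOn hH hr hrt).mono' ?_ ?_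
  · exact ((meas_sq H ε).comp (measurable_const.prodMk measurable_id)).aestronglyMeasurable
  · refine (ae_restrict_iff' measurableSet_Ioc).2 (ae_of_all _ fun u hu => ?_)
    rw [Real.norm_eq_abs, abs_of_nonneg (sq_nonneg _)]
    exact sq_diff_le hH hH1 hε hu.1 (lt_of_le_of_lt hu.2 hrt)

lemma v_le (hH : 1/2 < H) (hH1 : H < 1) (hε : 0 < ε) (hr : 0 < r) (hrt : r < t) :
    vfun H ε r t ≤ Cst H * (t - r) ^ (2*H - 2) := by
  have htr : (0:ℝ) < t - r := by linarith
  have h1 : vfun H ε r t ≤ ∫ u in Set.Ioc 0 r, 2*H*(H - 1/2)^2 * (t - u) ^ (2*H - 3) := by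
    rw [vfun, intervalIntegral.integral_of_le hr.le]
    exact setIntegral_mono_on (sq_integrableOn hH hH1 hε hr hrt) (g_integrableOn hH hr hrt)
      measurableSet_Ioc (fun u hu => sq_diff_le hH hH1 hε hu.1 (lt_of_le_of_lt hu.2 hrt))
  have h2 : ∫ u in Set.Ioc 0 r, 2*H*(H - 1/2)^2 * (t - u) ^ (2*H - 3)
      = 2*H*(H - 1/2)^2 * ∫ u in (0:ℝ)..r, (t - u) ^ (2*H - 3) := by
    rw [← intervalIntegral.integral_of_le hr.le, intervalIntegral.integral_const_mul]
  have h3 : ∫ u in (0:ℝ)..r, (t - u) ^ (2*H - 3)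
      = (t ^ (2*H - 2) - (t - r) ^ (2*H - 2)) / (2*H - 2) := by
    rw [intervalIntegral.integral_comp_sub_left (fun x => x ^ (2*H - 3)) t, sub_zero]
    rw [integral_rpow (Or.inr ⟨by intro h; nlinarith, by
      rw [Set.uIcc_of_le (by linarith)]
      intro h
      exact absurd h.1 (by linarith)⟩)]
    have he : 2*H - 3 + 1 = 2*H - 2 := by ring
    rw [he]
  have h4 : (t ^ (2*H - 2) - (t - r) ^ (2*H - 2)) / (2*H - 2)
      ≤ (t - r) ^ (2*H - 2) / (2 - 2*H) := by
    have heq : (t ^ (2*H - 2) - (t - r) ^ (2*H - 2)) / (2*H - 2)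
        = ((t - r) ^ (2*H - 2) - t ^ (2*H - 2)) / (2 - 2*H) := by
      rw [div_eq_div_iff (by linarith) (by linarith)]; ring
    rw [heq]
    have h0t : (0:ℝ) ≤ t ^ (2*H - 2) := Real.rpow_nonneg (by linarith) _
    exact div_le_div_of_nonneg_right (by linarith) (by linarith)
  calc vfun H ε r t ≤ 2*H*(H - 1/2)^2 * ((t ^ (2*H - 2) - (t - r) ^ (2*H - 2)) / (2*H - 2)) := by
        rw [← h3]; rw [h2] at h1; exact h1
    _ ≤ 2*H*(H - 1/2)^2 * ((t - r) ^ (2*H - 2) / (2 - 2*H)) := by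
        apply mul_le_mul_of_nonneg_left h4 (by positivity)
    _ = Cst H * (t - r) ^ (2*H - 2) := by rw [Cst]; ring

lemma v_tendsto (hH : 1/2 < H) (hH1 : H < 1) (hr : 0 < r) (hrt : r < t) :
    Tendsto (fun ε => vfun H ε r t) (nhdsWithin 0 (Set.Ioi 0)) (nhds 0) := by
  have hrw : ∀ ε, vfun H ε r t
      = ∫ u in Set.Ioc (0:ℝ) r, (DeltaK H ε t u / ε - dK H t u)^2 := fun ε =>
    intervalIntegral.integral_of_le hr.le
  have main := tendsto_integral_filter_of_dominated_convergence
      (μ := volume.restrict (Set.Ioc (0:ℝ) r))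
      (l := nhdsWithin (0:ℝ) (Set.Ioi 0))
      (F := fun ε u => (DeltaK H ε t u / ε - dK H t u)^2)
      (f := fun _ => (0:ℝ))
      (bound := fun u => 2*H*(H - 1/2)^2 * (t - u) ^ (2*H - 3))
      (Eventually.of_forall fun ε =>
        ((meas_sq H ε).comp (measurable_const.prodMk measurable_id)).aestronglyMeasurable)
      (by
        filter_upwards [eventually_mem_nhdsWithin] with ε (hε : ε ∈ Set.Ioi (0:ℝ))
        refine (ae_restrict_iff' measurableSet_Ioc).2 (ae_of_all _ fun u hu => ?_)
        rw [Real.norm_eq_abs, abs_of_nonneg (sq_nonneg _)]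
        exact sq_diff_le hH hH1 hε hu.1 (lt_of_le_of_lt hu.2 hrt))
      (g_integrableOn hH hr hrt)
      (by
        refine (ae_restrict_iff' measurableSet_Ioc).2 (ae_of_all _ fun u hu => ?_)
        have hut : u < t := lt_of_le_of_lt hu.2 hrt
        have hd := hasDeriv_kernel hH hut
        have hslope := hasDerivAt_iff_tendsto_slope.1 hd
        have hmapt : Tendsto (fun ε : ℝ => t + ε) (nhdsWithin 0 (Set.Ioi 0))
            (nhdsWithin t {t}ᶜ) := by
          refine tendsto_nhdsWithin_iff.2 ⟨?_, ?_⟩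
          · have h1 : Tendsto (fun ε : ℝ => t + ε) (nhds 0) (nhds (t + 0)) :=
              (continuous_const.add continuous_id).tendsto 0
            rw [add_zero] at h1
            exact h1.mono_left nhdsWithin_le_nhds
          · exact eventually_nhdsWithin_of_forall fun ε (hε : ε ∈ Set.Ioi (0:ℝ)) => by
              simp only [Set.mem_compl_iff, Set.mem_singleton_iff]
              intro h
              have : ε = 0 := by linarith [h]
              exact absurd this (ne_of_gt hε)
        have hcomp := hslope.comp hmapt
        have hDq : Tendsto (fun ε => DeltaK H ε t u / ε) (nhdsWithin 0 (Set.Ioi 0))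
            (nhds (dK H t u)) := by
          refine hcomp.congr' ?_
          filter_upwards [eventually_mem_nhdsWithin] with ε (hε : ε ∈ Set.Ioi (0:ℝ))
          show slope (fun s => Real.sqrt (2*H) * (s - u) ^ (H - 1/2)) t (t + ε)
              = DeltaK H ε t u / ε
          rw [slope_def_field, DeltaK_eq hε hu.1 hut]
          have : t + ε - t = ε := by ring
          rw [this]
        have := (hDq.sub (tendsto_const_nhds : Tendsto (fun _ : ℝ => dK H t u) _ _)).pow 2
        simpa using this)
  have heq : (fun ε => vfun H ε r t)
      = fun ε => ∫ u in Set.Ioc (0:ℝ) r, (DeltaK H ε t u / ε - dK H t u)^2 := funext hrw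
  rw [heq]
  simpa using main

/-- absolute moment of the standard Gaussian -/
noncomputable def Mq (q : ℝ) : ℝ := ∫ x, |x| ^ q ∂(ProbabilityTheory.gaussianReal 0 1)

lemma Mq_nonneg (q : ℝ) : 0 ≤ Mq q :=
  integral_nonneg fun x => Real.rpow_nonneg (abs_nonneg x) q

lemma abs_rpow_aesm (hq : 0 ≤ q) (ν : Measure ℝ) :
    AEStronglyMeasurable (fun x : ℝ => |x| ^ q) ν :=
  (continuous_abs.rpow_const (fun _ => Or.inr hq)).aestronglyMeasurable

lemma gauss_moment (hq : 0 < q) (V : ℝ≥0) :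
    ∫ x, |x| ^ q ∂(ProbabilityTheory.gaussianReal 0 V) = (V : ℝ) ^ (q/2) * Mq q := by
  rcases eq_or_ne V 0 with hV | hV
  · subst hV
    rw [ProbabilityTheory.gaussianReal_zero_var, integral_dirac]
    simp [Real.zero_rpow (ne_of_gt hq), Real.zero_rpow (show q/2 ≠ 0 by positivity)]
  · have hVpos : (0:ℝ) < (V:ℝ) := by
      have := V.coe_nonneg
      rcases this.lt_or_eq with h | h
      · exact h
      · exact absurd (by exact_mod_cast h.symm : V = 0) hV
    set c := Real.sqrt (V:ℝ) with hc
    have hcpos : (0:ℝ) < c := Real.sqrt_pos.2 hVpos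
    have hmap : (ProbabilityTheory.gaussianReal 0 1).map (c * ·)
        = ProbabilityTheory.gaussianReal 0 V := by
      rw [ProbabilityTheory.gaussianReal_map_const_mul]
      congr 1
      · ring
      · rw [mul_one]
        ext
        exact Real.sq_sqrt V.coe_nonneg
    rw [← hmap, integral_map (measurable_const_mul c).aemeasurable (abs_rpow_aesm hq.le _)]
    have hpt : ∀ x : ℝ, |c * x| ^ q = (V:ℝ) ^ (q/2) * |x| ^ q := by
      intro x
      rw [abs_mul, abs_of_nonneg hcpos.le, Real.mul_rpow hcpos.le (abs_nonneg x)]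
      congr 1
      rw [hc, Real.sqrt_eq_rpow, ← Real.rpow_mul V.coe_nonneg]
      congr 1
      ring
    simp_rw [hpt]
    exact integral_const_mul _ _

lemma hp_neg_one (hH1 : H < 1) (hq1 : 1 ≤ q) (hq2 : q < 1/(1-H)) :
    (-1:ℝ) < (2*H - 2)*(q/2) := by
  have h1H : (0:ℝ) < 1 - H := by linarith
  have h2 : q * (1 - H) < 1 := (lt_div_iff₀ h1H).1 hq2
  have h3 : (2*H - 2)*(q/2) = -(q * (1 - H)) := by ring
  rw [h3]; linarith

lemma pointwise_bound (hH : 1/2 < H) (hH1 : H < 1) (hq0 : 0 < q)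
    (hε : 0 < ε) (hr : 0 < r) (hrt : r < t) :
    ‖(vfun H ε r t)^(q/2) * Mq q‖ ≤ Mq q * (Cst H)^(q/2) * (t - r)^((2*H - 2)*(q/2)) := by
  have hv0 : 0 ≤ vfun H ε r t := v_nonneg hr.le
  have h1 : (vfun H ε r t)^(q/2) ≤ (Cst H * (t - r)^(2*H - 2))^(q/2) :=
    Real.rpow_le_rpow hv0 (v_le hH hH1 hε hr hrt) (by positivity)
  have h2 : (Cst H * (t - r)^(2*H - 2))^(q/2)
      = (Cst H)^(q/2) * (t - r)^((2*H - 2)*(q/2)) := by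
    rw [Real.mul_rpow (Cst_pos hH hH1).le (Real.rpow_nonneg (by linarith) _),
      ← Real.rpow_mul (by linarith : (0:ℝ) ≤ t - r)]
  rw [Real.norm_eq_abs, abs_of_nonneg (mul_nonneg (Real.rpow_nonneg hv0 _) (Mq_nonneg q))]
  calc (vfun H ε r t)^(q/2) * Mq q
      ≤ ((Cst H)^(q/2) * (t - r)^((2*H - 2)*(q/2))) * Mq q := by
        refine mul_le_mul_of_nonneg_right ?_ (Mq_nonneg q)
        rw [← h2]; exact h1
    _ = Mq q * (Cst H)^(q/2) * (t - r)^((2*H - 2)*(q/2)) := by ring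

lemma bound_integrableOn (hH1 : H < 1) (hq1 : 1 ≤ q) (hq2 : q < 1/(1-H)) (hrT : r ≤ T) :
    IntegrableOn (fun t => Mq q * (Cst H)^(q/2) * (t - r)^((2*H - 2)*(q/2)))
      (Set.Ioc r T) := by
  have hp := hp_neg_one hH1 hq1 hq2
  have h1 : IntervalIntegrable (fun x : ℝ => x ^ ((2*H - 2)*(q/2))) volume 0 (T - r) :=
    intervalIntegral.intervalIntegrable_rpow' hp
  have h2 := h1.comp_sub_right r
  have he1 : (0:ℝ) + r = r := by ring
  have he2 : T - r + r = T := by ring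
  rw [he1, he2] at h2
  exact h2.1.const_mul _

lemma inner_integrableOn (hH : 1/2 < H) (hH1 : H < 1) (hq1 : 1 ≤ q) (hq2 : q < 1/(1-H))
    (hε : 0 < ε) (hr : 0 < r) (hrT : r ≤ T) :
    IntegrableOn (fun t => (vfun H ε r t)^(q/2) * Mq q) (Set.Ioc r T) := by
  refine (bound_integrableOn hH1 hq1 hq2 hrT).mono' ?_ ?_
  · have hfun : (fun t => (vfun H ε r t)^(q/2) * Mq q)
        = fun t => (w H ε r t)^(q/2) * Mq q := funext fun t => by rw [w_eq_v hr.le]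
    rw [hfun]
    exact (((measurable_rpow_const (q/2)).comp (meas_w_t H ε r)).mul_const _).aestronglyMeasurable
  · refine (ae_restrict_iff' measurableSet_Ioc).2 (ae_of_all _ fun t ht => ?_)
    exact pointwise_bound (q := q) hH hH1 (by linarith) hε hr ht.1

lemma inner_le (hH : 1/2 < H) (hH1 : H < 1) (hq1 : 1 ≤ q) (hq2 : q < 1/(1-H))
    (hε : 0 < ε) (hr : 0 < r) (hrT : r ≤ T) :
    ∫ t in Set.Ioc r T, (vfun H ε r t)^(q/2) * Mq q
      ≤ Mq q * (Cst H)^(q/2) * (T^((2*H - 2)*(q/2)+1) / ((2*H - 2)*(q/2)+1)) := by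
  have hp := hp_neg_one hH1 hq1 hq2
  have hp1 : (0:ℝ) < (2*H - 2)*(q/2)+1 := by linarith
  have h1 : ∫ t in Set.Ioc r T, (vfun H ε r t)^(q/2) * Mq q
      ≤ ∫ t in Set.Ioc r T, Mq q * (Cst H)^(q/2) * (t - r)^((2*H - 2)*(q/2)) := by
    refine setIntegral_mono_on (inner_integrableOn hH hH1 hq1 hq2 hε hr hrT)
      (bound_integrableOn hH1 hq1 hq2 hrT) measurableSet_Ioc (fun t ht => ?_)
    have hb := pointwise_bound (q := q) hH hH1 (by linarith) hε hr ht.1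
    rw [Real.norm_eq_abs] at hb
    exact (le_abs_self _).trans hb
  have h2 : ∫ t in Set.Ioc r T, Mq q * (Cst H)^(q/2) * (t - r)^((2*H - 2)*(q/2))
      = Mq q * (Cst H)^(q/2) * ((T - r)^((2*H - 2)*(q/2)+1) / ((2*H - 2)*(q/2)+1)) := by
    rw [← intervalIntegral.integral_of_le hrT]
    rw [intervalIntegral.integral_const_mul,
      intervalIntegral.integral_comp_sub_right (fun x => x ^ ((2*H - 2)*(q/2))) r, sub_self,
      integral_rpow (Or.inl hp), Real.zero_rpow (ne_of_gt hp1), sub_zero]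
  refine h1.trans (h2.le.trans ?_)
  refine mul_le_mul_of_nonneg_left ?_
    (mul_nonneg (Mq_nonneg q) (Real.rpow_nonneg (Cst_pos hH hH1).le _))
  exact (div_le_div_iff_of_pos_right hp1).2 (Real.rpow_le_rpow (by linarith) (by linarith) hp1.le)

lemma inner_tendsto (hH : 1/2 < H) (hH1 : H < 1) (hq1 : 1 ≤ q) (hq2 : q < 1/(1-H))
    (hr : 0 < r) (hrT : r < T) :
    Tendsto (fun ε => ∫ t in Set.Ioc r T, (vfun H ε r t)^(q/2) * Mq q)
      (nhdsWithin 0 (Set.Ioi 0)) (nhds 0) := by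
  have hq0 : (0:ℝ) < q := by linarith
  have main := tendsto_integral_filter_of_dominated_convergence
    (μ := volume.restrict (Set.Ioc r T)) (l := nhdsWithin (0:ℝ) (Set.Ioi 0))
    (F := fun ε t => (vfun H ε r t)^(q/2) * Mq q) (f := fun _ => (0:ℝ))
    (bound := fun t => Mq q * (Cst H)^(q/2) * (t - r)^((2*H - 2)*(q/2)))
    (Eventually.of_forall fun ε => by
      have hfun : (fun t => (vfun H ε r t)^(q/2) * Mq q)
          = fun t => (w H ε r t)^(q/2) * Mq q := funext fun t => by rw [w_eq_v hr.le]
      show AEStronglyMeasurable (fun t => (vfun H ε r t)^(q/2) * Mq q) _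
      rw [hfun]
      exact (((measurable_rpow_const (q/2)).comp
        (meas_w_t H ε r)).mul_const _).aestronglyMeasurable)
    (by
      filter_upwards [eventually_mem_nhdsWithin] with ε (hε : ε ∈ Set.Ioi (0:ℝ))
      exact (ae_restrict_iff' measurableSet_Ioc).2 (ae_of_all _ fun t ht =>
        pointwise_bound hH hH1 hq0 hε hr ht.1))
    (bound_integrableOn hH1 hq1 hq2 hrT.le)
    (by
      refine (ae_restrict_iff' measurableSet_Ioc).2 (ae_of_all _ fun t ht => ?_)
      have hv := v_tendsto hH hH1 hr ht.1
      have h1 := (hv.rpow_const (Or.inr (by positivity : (0:ℝ) ≤ q/2))).mul_const (Mq q)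
      simpa [Real.zero_rpow (show q/2 ≠ 0 by positivity)] using h1)
  simpa using main

/-- measurable auxiliary version of the inner integral -/
noncomputable def Nfun (H q ε T r : ℝ) : ℝ :=
  ∫ t, Set.indicator (Set.Ioc r T) (fun t => (w H ε r t)^(q/2) * Mq q) t

set_option maxHeartbeats 1000000 in
lemma meas_N (H q ε T : ℝ) : Measurable fun r => Nfun H q ε T r := by
  have hm : Measurable fun x : ℝ × ℝ =>
      Set.indicator (Set.Ioc x.1 T) (fun t => (w H ε x.1 t)^(q/2) * Mq q) x.2 := by
    simp_rw [Set.indicator_apply]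
    refine Measurable.ite ?_ ?_ measurable_const
    · have : {x : ℝ × ℝ | x.2 ∈ Set.Ioc x.1 T} = {x : ℝ × ℝ | x.1 < x.2 ∧ x.2 ≤ T} := by
        ext x; simp [Set.mem_Ioc]
      rw [this]
      exact (measurableSet_lt measurable_fst measurable_snd).inter
        (measurableSet_le measurable_snd measurable_const)
    · exact ((measurable_rpow_const (q/2)).comp (meas_w H ε)).mul_const _
  exact hm.stronglyMeasurable.integral_prod_right'.measurable

lemma N_eq (hr : 0 < r) :
    Nfun H q ε T r = ∫ t in Set.Ioc r T, (vfun H ε r t)^(q/2) * Mq q := by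
  rw [Nfun, integral_indicator measurableSet_Ioc]
  exact setIntegral_congr_fun measurableSet_Ioc fun t ht => by rw [w_eq_v hr.le]

end RLaux


open RLaux

/-- `Δ ε r t` stands for `D^ε_{r,t}B - D_{r,t}B`, the difference of the approximate and exact
Nelson derivatives; being a Wiener integral it is centered Gaussian with variance
`∫₀^r (Δ_ε K(t,u)/ε - ∂K/∂t(t,u))² du` (hypothesis `hGauss`).  The conclusion is
`∫₀ᵀ ∫_r^T E|D^ε_{r,t}B - D_{r,t}B|^q dt dr → 0` as `ε ↓ 0` for `1 ≤ q < 1/(1-H)`. -/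
theorem stmt11 {Ω : Type*} [MeasurableSpace Ω] (μ : Measure Ω) [IsProbabilityMeasure μ]
    (H T q : ℝ) (hH : 1/2 < H) (hH1 : H < 1) (hT : 0 < T)
    (hq1 : 1 ≤ q) (hq2 : q < 1/(1-H))
    (Δ : ℝ → ℝ → ℝ → Ω → ℝ)
    (hGauss : ∀ ε > (0:ℝ), ∀ r t : ℝ, 0 < r → r < t → t ≤ T →
      Measure.map (Δ ε r t) μ = ProbabilityTheory.gaussianReal 0
        (Real.toNNReal (∫ u in (0:ℝ)..r, (DeltaK H ε t u / ε - dK H t u)^2))) :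
    Filter.Tendsto
      (fun ε => ∫ r in (0:ℝ)..T, ∫ t in r..T, ∫ ω, |Δ ε r t ω| ^ q ∂μ)
      (nhdsWithin 0 (Set.Ioi 0)) (nhds 0) := by
  have hq0 : (0:ℝ) < q := by linarith
  -- the moment identity coming from the Gaussian hypothesis
  have hmom : ∀ ε > (0:ℝ), ∀ r t : ℝ, 0 < r → r < t → t ≤ T →
      (∫ ω, |Δ ε r t ω| ^ q ∂μ) = (vfun H ε r t)^(q/2) * Mq q := by
    intro ε hε r t hr hrt htT
    have hmap := hGauss ε hε r t hr hrt htT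
    have haem : AEMeasurable (Δ ε r t) μ := by
      by_contra hcon
      rw [Measure.map_of_not_aemeasurable hcon] at hmap
      have h1 : (ProbabilityTheory.gaussianReal 0
          (Real.toNNReal (∫ u in (0:ℝ)..r, (DeltaK H ε t u / ε - dK H t u)^2)))
          Set.univ = 0 := by rw [← hmap]; simp
      rw [measure_univ] at h1
      exact one_ne_zero h1
    have h2 : (∫ ω, |Δ ε r t ω| ^ q ∂μ) = ∫ x, |x| ^ q ∂(Measure.map (Δ ε r t) μ) :=
      (integral_map haem (abs_rpow_aesm hq0.le _)).symm
    rw [h2, hmap, gauss_moment hq0,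
      Real.coe_toNNReal (∫ u in (0:ℝ)..r, (DeltaK H ε t u / ε - dK H t u)^2)
        (v_nonneg hr.le)]
    rfl
  -- rewriting the inner integral
  have hFG : ∀ ε > (0:ℝ), ∀ r : ℝ, 0 < r → r ≤ T →
      (∫ t in r..T, ∫ ω, |Δ ε r t ω| ^ q ∂μ)
        = ∫ t in Set.Ioc r T, (vfun H ε r t)^(q/2) * Mq q := by
    intro ε hε r hr hrT
    rw [intervalIntegral.integral_of_le hrT]
    exact setIntegral_congr_fun measurableSet_Ioc fun t ht => hmom ε hε r t hr ht.1 ht.2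
  have hmeas : ∀ᶠ ε in nhdsWithin (0:ℝ) (Set.Ioi 0),
      AEStronglyMeasurable (fun r => ∫ t in r..T, ∫ ω, |Δ ε r t ω| ^ q ∂μ)
        (volume.restrict (Set.Ioc (0:ℝ) T)) := by
    filter_upwards [eventually_mem_nhdsWithin] with ε (hε : ε ∈ Set.Ioi (0:ℝ))
    refine (meas_N H q ε T).aestronglyMeasurable.congr ?_
    refine (ae_restrict_iff' measurableSet_Ioc).2 (ae_of_all _ fun r hr => ?_)
    show Nfun H q ε T r = ∫ t in r..T, ∫ ω, |Δ ε r t ω| ^ q ∂μ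
    rw [N_eq hr.1, ← hFG ε hε r hr.1 hr.2]
  have hbnd : ∀ᶠ ε in nhdsWithin (0:ℝ) (Set.Ioi 0),
      ∀ᵐ r ∂(volume.restrict (Set.Ioc (0:ℝ) T)),
        ‖∫ t in r..T, ∫ ω, |Δ ε r t ω| ^ q ∂μ‖
          ≤ Mq q * (Cst H)^(q/2) * (T^((2*H - 2)*(q/2)+1) / ((2*H - 2)*(q/2)+1)) := by
    filter_upwards [eventually_mem_nhdsWithin] with ε (hε : ε ∈ Set.Ioi (0:ℝ))
    refine (ae_restrict_iff' measurableSet_Ioc).2 (ae_of_all _ fun r hr => ?_)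
    rw [hFG ε hε r hr.1 hr.2]
    have hnn : 0 ≤ ∫ t in Set.Ioc r T, (vfun H ε r t)^(q/2) * Mq q :=
      setIntegral_nonneg measurableSet_Ioc fun t ht =>
        mul_nonneg (Real.rpow_nonneg (v_nonneg hr.1.le) _) (Mq_nonneg q)
    rw [Real.norm_eq_abs, abs_of_nonneg hnn]
    exact inner_le hH hH1 hq1 hq2 hε hr.1 hr.2
  have hint : Integrable
      (fun _ : ℝ => Mq q * (Cst H)^(q/2) * (T^((2*H - 2)*(q/2)+1) / ((2*H - 2)*(q/2)+1)))
      (volume.restrict (Set.Ioc (0:ℝ) T)) := by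
    exact integrableOn_const measure_Ioc_lt_top.ne
  have hlim : ∀ᵐ r ∂(volume.restrict (Set.Ioc (0:ℝ) T)),
      Tendsto (fun ε => ∫ t in r..T, ∫ ω, |Δ ε r t ω| ^ q ∂μ)
        (nhdsWithin (0:ℝ) (Set.Ioi 0)) (nhds 0) := by
    refine (ae_restrict_iff' measurableSet_Ioc).2 (ae_of_all _ fun r hr => ?_)
    rcases eq_or_lt_of_le hr.2 with hrT | hrT
    · have hzero : (fun ε => ∫ t in r..T, ∫ ω, |Δ ε r t ω| ^ q ∂μ) = fun _ => 0 := by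
        funext ε
        rw [hrT, intervalIntegral.integral_same]
      rw [hzero]
      exact tendsto_const_nhds
    · refine (inner_tendsto hH hH1 hq1 hq2 hr.1 hrT).congr' ?_
      filter_upwards [eventually_mem_nhdsWithin] with ε (hε : ε ∈ Set.Ioi (0:ℝ))
      exact (hFG ε hε r hr.1 hr.2).symm
  have main := tendsto_integral_filter_of_dominated_convergence
    (μ := volume.restrict (Set.Ioc (0:ℝ) T)) (l := nhdsWithin (0:ℝ) (Set.Ioi 0))
    (F := fun ε r => ∫ t in r..T, ∫ ω, |Δ ε r t ω| ^ q ∂μ) (f := fun _ => (0:ℝ))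
    (bound := fun _ => Mq q * (Cst H)^(q/2) * (T^((2*H - 2)*(q/2)+1) / ((2*H - 2)*(q/2)+1)))
    hmeas hbnd hint hlim
  have hout : (fun ε => ∫ r in (0:ℝ)..T, ∫ t in r..T, ∫ ω, |Δ ε r t ω| ^ q ∂μ)
      = fun ε => ∫ r in Set.Ioc (0:ℝ) T, ∫ t in r..T, ∫ ω, |Δ ε r t ω| ^ q ∂μ :=
    funext fun ε => intervalIntegral.integral_of_le hT.le
  rw [hout]
  simpa using main
end

section
/- The Nelson derivative of the Riemann–Liouville fBm exists off the diagonal: for 0 < r < t, the limit D_{r,t}B := lim_{ε↓0} (1/ε)E[B_{t+ε} − B_t | F_r] exists in L²(Ω) and equals ∫₀^r (∂K/∂t)(t,u) dW_u, a Gaussian random variable with variance 2H(H−1/2)² ∫₀^r (t−u)^{2H−3} du. -/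
open MeasureTheory Real

section helpers

lemma rpow_lip {m a b p : ℝ} (hm : 0 < m) (hma : m ≤ a) (hab : a ≤ b) (hp1 : p ≤ 1) :
    |b ^ p - a ^ p| ≤ |p| * m ^ (p - 1) * (b - a) := by
  have hkey := (convex_Icc a b).norm_image_sub_le_of_norm_hasDerivWithin_le
    (f := fun x : ℝ => x ^ p) (f' := fun x : ℝ => p * x ^ (p - 1))
    (C := |p| * m ^ (p - 1)) (fun x hx =>
      (Real.hasDerivAt_rpow_const (Or.inl
        (ne_of_gt (lt_of_lt_of_le hm (hma.trans hx.1))))).hasDerivWithinAt)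
    (fun x hx => by
      have hmx : m ≤ x := hma.trans hx.1
      have hx0 : (0:ℝ) < x := lt_of_lt_of_le hm hmx
      rw [Real.norm_eq_abs, abs_mul, abs_of_nonneg (Real.rpow_nonneg hx0.le _)]
      exact mul_le_mul_of_nonneg_left
        (Real.rpow_le_rpow_of_nonpos hm hmx (by linarith)) (abs_nonneg p))
    (Set.left_mem_Icc.2 hab) (Set.right_mem_Icc.2 hab)
  rw [Real.norm_eq_abs, Real.norm_eq_abs, abs_of_nonneg (by linarith : (0:ℝ) ≤ b - a)] at hkey
  exact hkey

lemma taylor_bound {m a p ε : ℝ} (hm : 0 < m) (hma : m ≤ a) (hp0 : 0 < p) (hp1 : p ≤ 1)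
    (hε : 0 < ε) :
    |(a + ε) ^ p - a ^ p - ε * (p * a ^ (p - 1))| ≤ p * (1 - p) * m ^ (p - 2) * ε ^ 2 := by
  have ha0 : (0:ℝ) < a := lt_of_lt_of_le hm hma
  have hkey := (convex_Icc a (a + ε)).norm_image_sub_le_of_norm_hasDerivWithin_le
    (f := fun x : ℝ => x ^ p - p * a ^ (p - 1) * x)
    (f' := fun x : ℝ => p * x ^ (p - 1) - p * a ^ (p - 1))
    (C := p * (1 - p) * m ^ (p - 2) * ε) (fun x hx =>
      ((Real.hasDerivAt_rpow_const (Or.inl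
        (ne_of_gt (lt_of_lt_of_le hm (hma.trans hx.1))))).sub
        ((hasDerivAt_id x).const_mul (p * a ^ (p - 1)))).hasDerivWithinAt.congr_deriv
        (by ring))
    (fun x hx => by
      have hax : a ≤ x := hx.1
      have hxb : x ≤ a + ε := hx.2
      have h1 : |x ^ (p-1) - a ^ (p-1)| ≤ |p-1| * m ^ (p - 1 - 1) * (x - a) :=
        rpow_lip hm hma hax (by linarith)
      have h2 : |p-1| = 1 - p := by
        rw [abs_of_nonpos (by linarith : p - 1 ≤ 0)]; ring
      rw [Real.norm_eq_abs]
      show |p * x ^ (p - 1) - p * a ^ (p - 1)| ≤ p * (1 - p) * m ^ (p - 2) * ε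
      have e : p * x ^ (p - 1) - p * a ^ (p - 1) = p * (x ^ (p-1) - a ^ (p-1)) := by ring
      rw [e, abs_mul, abs_of_nonneg hp0.le]
      calc p * |x ^ (p-1) - a ^ (p-1)| ≤ p * ((1 - p) * m ^ (p - 1 - 1) * (x - a)) :=
            mul_le_mul_of_nonneg_left (h2 ▸ h1) hp0.le
        _ ≤ p * ((1 - p) * m ^ (p - 2) * ε) := by
            apply mul_le_mul_of_nonneg_left _ hp0.le
            have : p - 1 - 1 = p - 2 := by ring
            rw [this]
            apply mul_le_mul_of_nonneg_left (by linarith)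
              (mul_nonneg (by linarith) (Real.rpow_nonneg hm.le _))
        _ = p * (1 - p) * m ^ (p - 2) * ε := by ring)
    (Set.left_mem_Icc.2 (by linarith)) (Set.right_mem_Icc.2 (by linarith))
  rw [Real.norm_eq_abs, Real.norm_eq_abs, abs_of_nonneg (by linarith : (0:ℝ) ≤ a + ε - a)] at hkey
  have e1 : ((a+ε) ^ p - p * a ^ (p-1) * (a+ε)) - (a ^ p - p * a ^ (p-1) * a)
      = (a + ε) ^ p - a ^ p - ε * (p * a ^ (p - 1)) := by ring
  rw [e1] at hkey
  calc |(a + ε) ^ p - a ^ p - ε * (p * a ^ (p - 1))|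
      ≤ p * (1 - p) * m ^ (p - 2) * ε * (a + ε - a) := hkey
    _ = p * (1 - p) * m ^ (p - 2) * ε ^ 2 := by ring

open ProbabilityTheory in
lemma gauss_sq_integrable : Integrable (fun x : ℝ => x ^ 2) (gaussianReal 0 1) := by
  rw [gaussianReal_of_var_ne_zero 0 one_ne_zero]
  rw [integrable_withDensity_iff (measurable_gaussianPDF 0 1)
    (Filter.Eventually.of_forall fun x => ENNReal.ofReal_lt_top)]
  have base : Integrable (fun x : ℝ => x ^ (2:ℝ) * rexp (-(1/2) * x ^ 2)) :=
    integrable_rpow_mul_exp_neg_mul_sq (by norm_num) (by norm_num : (-1:ℝ) < 2)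
  have base2 : Integrable (fun x : ℝ => x ^ 2 * rexp (-(1/2) * x ^ 2)) := by
    have : (fun x : ℝ => x ^ 2 * rexp (-(1/2) * x ^ 2))
        = fun x : ℝ => x ^ (2:ℝ) * rexp (-(1/2) * x ^ 2) := by
      funext x
      rw [show ((2:ℝ) = ((2:ℕ):ℝ)) by norm_num, Real.rpow_natCast]
    rw [this]; exact base
  have := (base2.const_mul ((Real.sqrt (2 * π))⁻¹))
  apply this.congr
  filter_upwards with x
  rw [gaussianPDF, ENNReal.toReal_ofReal (gaussianPDFReal_nonneg 0 1 x), gaussianPDFReal]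
  push_cast
  rw [sub_zero, show -x ^ 2 / (2*1) = -(1/2) * x ^ 2 by ring]
  ring

open ProbabilityTheory in
lemma gauss_eLpNorm_ne_top : eLpNorm (id : ℝ → ℝ) 2 (gaussianReal 0 1) ≠ ⊤ :=
  ((memLp_two_iff_integrable_sq aestronglyMeasurable_id).mpr gauss_sq_integrable).eLpNorm_ne_top

open ProbabilityTheory in
lemma key_eLpNorm {Ω : Type*} {mΩ : MeasurableSpace Ω} (μ : Measure Ω)
    (X : Ω → ℝ) (v : ℝ) (hv : 0 ≤ v)
    (hmap : Measure.map X μ = gaussianReal 0 v.toNNReal) :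
    eLpNorm X 2 μ = ENNReal.ofReal (Real.sqrt v)
      * eLpNorm (id : ℝ → ℝ) 2 (gaussianReal 0 1) := by
  have hXm : AEMeasurable X μ := by
    by_contra hc
    rw [Measure.map_of_not_aemeasurable hc] at hmap
    have h1 : (gaussianReal 0 v.toNNReal) Set.univ = 1 := measure_univ
    rw [← hmap] at h1
    simp at h1
  have hscale : gaussianReal 0 v.toNNReal
      = (gaussianReal 0 1).map (fun x => Real.sqrt v * x) := by
    have := gaussianReal_map_const_mul (μ := 0) (v := 1) (Real.sqrt v)
    rw [this]
    congr 1
    · simp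
    · apply NNReal.coe_injective
      simp [Real.sq_sqrt hv, Real.coe_toNNReal _ hv]
  calc eLpNorm X 2 μ = eLpNorm (id ∘ X) 2 μ := rfl
    _ = eLpNorm (id : ℝ → ℝ) 2 (Measure.map X μ) :=
        (eLpNorm_map_measure aestronglyMeasurable_id hXm).symm
    _ = eLpNorm (id : ℝ → ℝ) 2 ((gaussianReal 0 1).map (fun x => Real.sqrt v * x)) := by
        rw [hmap, hscale]
    _ = eLpNorm (fun x => Real.sqrt v * x) 2 (gaussianReal 0 1) :=
        eLpNorm_map_measure aestronglyMeasurable_id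
          (measurable_const_mul _).aemeasurable
    _ = eLpNorm ((Real.sqrt v) • (id : ℝ → ℝ)) 2 (gaussianReal 0 1) := rfl
    _ = ‖Real.sqrt v‖₊ * eLpNorm (id : ℝ → ℝ) 2 (gaussianReal 0 1) :=
        eLpNorm_const_smul _ _ _ _
    _ = ENNReal.ofReal (Real.sqrt v) * eLpNorm (id : ℝ → ℝ) 2 (gaussianReal 0 1) := by
        rw [← ENNReal.ofReal_coe_nnreal, coe_nnnorm, Real.norm_eq_abs,
          abs_of_nonneg (Real.sqrt_nonneg v)]

end helpers

/-- Existence of the Nelson derivative off the diagonal.  `I` is the Wiener-integral map of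
the underlying Brownian motion `W` (Gaussian law `hLaw`, a.e.-linearity `hLin`), and
`hCond` encodes `E[B_{t+ε}-B_t | F_r] = ∫₀^r (K(t+ε,u)-K(t,u)) dW_u`.  The conclusion:
`(1/ε)E[B_{t+ε}-B_t|F_r] → ∫₀^r ∂K/∂t(t,u) dW_u` in `L²(Ω)` as `ε ↓ 0`, and the limit is
centered Gaussian with variance `2H(H-1/2)² ∫₀^r (t-u)^{2H-3} du`. -/
theorem stmt12 {Ω : Type*} {mΩ : MeasurableSpace Ω} (μ : Measure Ω) [IsProbabilityMeasure μ]
    (H r t : ℝ) (hH : 1/2 < H) (hH1 : H < 1) (hr : 0 < r) (hrt : r < t)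
    (ℱ : ℝ → MeasurableSpace Ω) (hℱ : ∀ s, ℱ s ≤ mΩ)
    (B : ℝ → Ω → ℝ) (I : (ℝ → ℝ) → Ω → ℝ)
    (hLaw : ∀ f : ℝ → ℝ, Integrable (fun u => (f u)^2) →
      Measure.map (I f) μ = ProbabilityTheory.gaussianReal 0
        (Real.toNNReal (∫ u, (f u)^2)))
    (hLin : ∀ (c : ℝ) (f g : ℝ → ℝ),
      I (fun u => c * f u - g u) =ᵐ[μ] fun ω => c * I f ω - I g ω)
    (hCond : ∀ ε > (0:ℝ),
      μ[fun ω => B (t+ε) ω - B t ω | ℱ r] =ᵐ[μ]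
        I (Set.indicator (Set.Ioo 0 r) (fun u => K H (t+ε) u - K H t u))) :
    Filter.Tendsto (fun ε =>
        eLpNorm (fun ω => (1/ε) * ((μ[fun ω' => B (t+ε) ω' - B t ω' | ℱ r]) ω)
          - I (Set.indicator (Set.Ioo 0 r) (fun u => dK H t u)) ω) 2 μ)
      (nhdsWithin 0 (Set.Ioi 0)) (nhds 0) ∧
    Measure.map (I (Set.indicator (Set.Ioo 0 r) (fun u => dK H t u))) μ
      = ProbabilityTheory.gaussianReal 0
          (Real.toNNReal (2*H*(H - 1/2)^2 * ∫ u in (0:ℝ)..r, (t-u) ^ (2*H-3))) := by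
  have h2H : (0:ℝ) ≤ 2 * H := by linarith
  have hp0 : (0:ℝ) < H - 1/2 := by linarith
  have hp1 : H - 1/2 ≤ 1 := by linarith
  have hm : (0:ℝ) < t - r := by linarith
  set f : ℝ → ℝ := Set.indicator (Set.Ioo 0 r) (fun u => dK H t u) with hfdef
  -- continuity of shifted power functions on [0, r]
  have hbase : ∀ (s q : ℝ), r < s → ContinuousOn (fun u : ℝ => (s - u) ^ q) (Set.Icc 0 r) := by
    intro s q hs
    apply ContinuousOn.rpow_const ((continuous_const.sub continuous_id).continuousOn)
    intro u hu
    exact Or.inl (ne_of_gt (by show (0:ℝ) < s - u; linarith [hu.2]))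
  -- integrability of indicators of continuous functions
  have intInd : ∀ φ : ℝ → ℝ, ContinuousOn φ (Set.Icc 0 r) →
      Integrable (Set.indicator (Set.Ioo 0 r) φ) := by
    intro φ hφ
    exact (integrable_indicator_iff measurableSet_Ioo).mpr
      ((hφ.integrableOn_Icc).mono_set Set.Ioo_subset_Icc_self)
  have sqind : ∀ (φ : ℝ → ℝ) (u : ℝ),
      (Set.indicator (Set.Ioo 0 r) φ u) ^ 2
        = Set.indicator (Set.Ioo 0 r) (fun u => (φ u) ^ 2) u := by
    intro φ u
    by_cases h : u ∈ Set.Ioo (0:ℝ) r <;> simp [h]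
  have hcdK : ContinuousOn (fun u => dK H t u) (Set.Icc 0 r) := by
    simp only [dK]
    exact continuousOn_const.mul (hbase t _ hrt)
  have hf2int : Integrable (fun u => (f u) ^ 2) := by
    rw [hfdef, funext (sqind _)]
    exact intInd _ (hcdK.pow 2)
  -- variance identity
  have hvar : ∫ u, (f u)^2 = 2*H*(H - 1/2)^2 * ∫ u in (0:ℝ)..r, (t-u) ^ (2*H-3) := by
    rw [hfdef, funext (sqind _), integral_indicator measurableSet_Ioo,
      intervalIntegral.integral_of_le hr.le, ← integral_Ioc_eq_integral_Ioo,
      ← integral_const_mul]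
    apply setIntegral_congr_fun measurableSet_Ioc
    intro u hu
    have hut : 0 < t - u := by linarith [hu.2]
    simp only [dK]
    rw [mul_pow, mul_pow, Real.sq_sqrt h2H, sq ((t - u) ^ (H - 3/2)),
      ← Real.rpow_add hut]
    rw [show H - 3/2 + (H - 3/2) = 2*H - 3 by ring]
  have part2 : Measure.map (I f) μ = ProbabilityTheory.gaussianReal 0
      (Real.toNNReal (2*H*(H - 1/2)^2 * ∫ u in (0:ℝ)..r, (t-u) ^ (2*H-3))) := by
    rw [hLaw f hf2int, hvar]
  -- the increment kernels
  set gfun : ℝ → ℝ → ℝ := fun ε =>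
    Set.indicator (Set.Ioo 0 r) (fun u => K H (t+ε) u - K H t u) with hgdef
  set hh : ℝ → ℝ → ℝ := fun ε => fun u => (1/ε) * gfun ε u - f u with hhdef
  set ψ : ℝ → ℝ → ℝ := fun ε u => Real.sqrt (2*H) *
    ((1/ε) * ((t + ε - u) ^ (H - 1/2) - (t - u) ^ (H - 1/2))
      - (H - 1/2) * (t - u) ^ (H - 3/2)) with hψdef
  have hrep : ∀ ε, 0 < ε → hh ε = Set.indicator (Set.Ioo 0 r) (ψ ε) := by
    intro ε hε
    funext u
    by_cases hu : u ∈ Set.Ioo (0:ℝ) r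
    · have hu2 : u < t := lt_trans hu.2 hrt
      simp only [hhdef, hgdef, hfdef, hψdef, Set.indicator_of_mem hu]
      rw [K, K, if_pos ⟨hu.1, by linarith⟩, if_pos ⟨hu.1, hu2⟩, dK]
      ring
    · simp only [hhdef, hgdef, hfdef, Set.indicator_of_notMem hu]
      ring
  set C : ℝ := Real.sqrt (2*H) *
    ((H - 1/2) * (1 - (H - 1/2)) * (t - r) ^ (H - 1/2 - 2)) with hCdef
  have hC0 : 0 ≤ C := by
    apply mul_nonneg (Real.sqrt_nonneg _)
    apply mul_nonneg (mul_nonneg hp0.le (by linarith)) (Real.rpow_nonneg hm.le _)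
  have hest : ∀ ε, 0 < ε → ∀ u ∈ Set.Ioo (0:ℝ) r, |ψ ε u| ≤ C * ε := by
    intro ε hε u hu
    have hma : t - r ≤ t - u := by linarith [hu.2]
    have tb := taylor_bound hm hma hp0 hp1 hε
    rw [show t - u + ε = t + ε - u by ring,
      show H - 1/2 - 1 = H - 3/2 by ring] at tb
    have inner : (1/ε) * ((t + ε - u) ^ (H - 1/2) - (t - u) ^ (H - 1/2))
        - (H - 1/2) * (t - u) ^ (H - 3/2)
        = (1/ε) * ((t + ε - u) ^ (H - 1/2) - (t - u) ^ (H - 1/2)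
          - ε * ((H - 1/2) * (t - u) ^ (H - 3/2))) := by
      field_simp
    rw [hψdef]
    simp only []
    rw [inner, abs_mul, abs_mul, abs_of_nonneg (Real.sqrt_nonneg _),
      abs_of_nonneg (by positivity : (0:ℝ) ≤ 1/ε)]
    calc Real.sqrt (2*H) * (1/ε * |(t + ε - u) ^ (H - 1/2) - (t - u) ^ (H - 1/2)
          - ε * ((H - 1/2) * (t - u) ^ (H - 3/2))|)
        ≤ Real.sqrt (2*H) * (1/ε *
            ((H - 1/2) * (1 - (H - 1/2)) * (t - r) ^ (H - 1/2 - 2) * ε ^ 2)) := by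
          apply mul_le_mul_of_nonneg_left _ (Real.sqrt_nonneg _)
          exact mul_le_mul_of_nonneg_left tb (by positivity)
      _ = C * ε := by rw [hCdef]; field_simp
  -- continuity of ψ ε on [0, r]
  have hcψ : ∀ ε, 0 < ε → ContinuousOn (ψ ε) (Set.Icc 0 r) := by
    intro ε hε
    rw [hψdef]
    exact continuousOn_const.mul ((continuousOn_const.mul
      ((hbase (t+ε) _ (by linarith)).sub (hbase t _ hrt))).sub
      (continuousOn_const.mul (hbase t _ hrt)))
  have hh2int : ∀ ε, 0 < ε → Integrable (fun u => (hh ε u) ^ 2) := by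
    intro ε hε
    rw [hrep ε hε, funext (sqind _)]
    exact intInd _ ((hcψ ε hε).pow 2)
  have hvnn : ∀ ε, (0:ℝ) ≤ ∫ u, (hh ε u) ^ 2 :=
    fun ε => integral_nonneg fun u => sq_nonneg _
  have hvbound : ∀ ε, 0 < ε → ∫ u, (hh ε u) ^ 2 ≤ (C * ε) ^ 2 * r := by
    intro ε hε
    have hint2 : Integrable (Set.indicator (Set.Ioo 0 r) (fun _ : ℝ => (C*ε)^2)) :=
      intInd _ continuousOn_const
    have hmono : ∀ u, (hh ε u) ^ 2 ≤ Set.indicator (Set.Ioo 0 r) (fun _ => (C*ε)^2) u := by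
      intro u
      rw [hrep ε hε, sqind]
      by_cases hu : u ∈ Set.Ioo (0:ℝ) r
      · rw [Set.indicator_of_mem hu, Set.indicator_of_mem hu]
        have := abs_le.mp (hest ε hε u hu)
        exact sq_le_sq' (by linarith [this.1]) this.2
      · rw [Set.indicator_of_notMem hu, Set.indicator_of_notMem hu]
    calc ∫ u, (hh ε u) ^ 2 ≤ ∫ u, Set.indicator (Set.Ioo 0 r) (fun _ => (C*ε)^2) u :=
          integral_mono (hh2int ε hε) hint2 hmono
      _ = (C * ε) ^ 2 * r := by
          rw [integral_indicator_const _ measurableSet_Ioo, Real.volume_real_Ioo_of_le hr.le,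
            sub_zero, smul_eq_mul]
          ring
  -- the eLpNorm formula
  set C₀ : ENNReal := eLpNorm (id : ℝ → ℝ) 2 (ProbabilityTheory.gaussianReal 0 1) with hC₀def
  have hform : ∀ ε, 0 < ε →
      eLpNorm (fun ω => (1/ε) * ((μ[fun ω' => B (t+ε) ω' - B t ω' | ℱ r]) ω)
          - I f ω) 2 μ
        = ENNReal.ofReal (Real.sqrt (∫ u, (hh ε u) ^ 2)) * C₀ := by
    intro ε hε
    have hae : (fun ω => (1/ε) * ((μ[fun ω' => B (t+ε) ω' - B t ω' | ℱ r]) ω)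
        - I f ω) =ᵐ[μ] I (hh ε) := by
      filter_upwards [hCond ε hε, hLin (1/ε) (gfun ε) f] with ω h1 h2
      rw [h1]
      exact h2.symm
    rw [eLpNorm_congr_ae hae]
    exact key_eLpNorm μ _ _ (hvnn ε) (hLaw (hh ε) (hh2int ε hε))
  -- convergence
  have hsq : Filter.Tendsto (fun ε => Real.sqrt (∫ u, (hh ε u) ^ 2))
      (nhdsWithin 0 (Set.Ioi 0)) (nhds 0) := by
    have e1 : ∀ᶠ (ε : ℝ) in nhdsWithin 0 (Set.Ioi 0),
        0 ≤ Real.sqrt (∫ u, (hh ε u) ^ 2) :=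
      Filter.eventually_of_mem self_mem_nhdsWithin fun ε _ => Real.sqrt_nonneg _
    have e2 : ∀ᶠ (ε : ℝ) in nhdsWithin 0 (Set.Ioi 0),
        Real.sqrt (∫ u, (hh ε u) ^ 2) ≤ (C * Real.sqrt r) * ε := by
      apply Filter.eventually_of_mem self_mem_nhdsWithin
      intro ε hε
      have hε' : (0:ℝ) < ε := hε
      calc Real.sqrt (∫ u, (hh ε u) ^ 2) ≤ Real.sqrt ((C * ε) ^ 2 * r) :=
            Real.sqrt_le_sqrt (hvbound ε hε')
        _ = (C * Real.sqrt r) * ε := by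
            rw [Real.sqrt_mul (sq_nonneg _), Real.sqrt_sq (by positivity)]
            ring
    have e3 : Filter.Tendsto (fun ε : ℝ => (C * Real.sqrt r) * ε)
        (nhdsWithin 0 (Set.Ioi 0)) (nhds 0) := by
      have : Filter.Tendsto (fun ε : ℝ => (C * Real.sqrt r) * ε)
          (nhdsWithin 0 (Set.Ioi 0)) (nhds ((C * Real.sqrt r) * 0)) :=
        ((continuous_const.mul continuous_id).tendsto 0).mono_left nhdsWithin_le_nhds
      simpa using this
    exact squeeze_zero' e1 e2 e3
  have h0 : Filter.Tendsto
      (fun ε => ENNReal.ofReal (Real.sqrt (∫ u, (hh ε u) ^ 2)) * C₀)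
      (nhdsWithin 0 (Set.Ioi 0)) (nhds 0) := by
    have h1 := (ENNReal.tendsto_ofReal hsq)
    have h2 := ENNReal.Tendsto.mul_const h1 (Or.inr gauss_eLpNorm_ne_top)
    simpa using h2
  refine ⟨Filter.Tendsto.congr' ?_ h0, part2⟩
  exact Filter.eventually_of_mem self_mem_nhdsWithin fun ε hε => (hform ε hε).symm
end
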